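/- arXiv:2304.01338 — 8 statements merged into one kernel-verified Lean document; each statement's English description precedes it below -/
import Mathlib

section
/- Let U ⊆ ℝⁿ be an open neighborhood of the origin and F : U → ℝ a function that is real analytic at the origin. Then F satisfies the monomial curve condition at 0; that is, for every n-tuple of positive integers (m₁,…,mₙ) the one-variable function t ↦ F(t^{m₁},…,t^{mₙ}) admits a convergent power series expansion Σ_k a_k t^k on a neighborhood of 0 ∈ ℝ in which a_k = 0 for every k outside the additive submonoid of ℕ generated by m₁,…,mₙ. -/
/-- `F` satisfies the monomial curve condition at `0`: for every tuple of positive integers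
`(m₁, …, mₙ)`, the one-variable function `t ↦ F(t^{m₁}, …, t^{mₙ})` admits a convergent
power series expansion at `0` whose coefficients vanish outside the additive submonoid of
`ℕ` generated by `m₁, …, mₙ`. -/
def MonomialCurveCondition {n : ℕ} (F : (Fin n → ℝ) → ℝ) : Prop :=
  ∀ m : Fin n → ℕ, (∀ i, 0 < m i) →
    ∃ p : FormalMultilinearSeries ℝ ℝ ℝ,
      HasFPowerSeriesAt (fun t : ℝ => F (fun i => t ^ m i)) p 0 ∧
      ∀ k ∉ AddSubmonoid.closure (Set.range m), p.coeff k = 0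

/-- easy direction of Theorem 1. A function that is real analytic at the
origin of an open neighborhood `U ⊆ ℝⁿ` of `0` satisfies the monomial curve condition. -/
theorem monomialCurveCondition_of_analyticAt
    (n : ℕ) (U : Set (Fin n → ℝ)) (hU : IsOpen U) (h0 : (0 : Fin n → ℝ) ∈ U)
    (F : (Fin n → ℝ) → ℝ) (hF : AnalyticAt ℝ F 0) :
    MonomialCurveCondition F := by
  intro m hm
  obtain ⟨q, hq⟩ := hF
  -- the coefficient vectors of the inner (polynomial) map `g t = fun i => t ^ m i`
  set v : ℕ → (Fin n → ℝ) := fun k i => if m i = k then 1 else 0 with hv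
  -- its formal power series
  set P : FormalMultilinearSeries ℝ ℝ (Fin n → ℝ) :=
    fun k => ContinuousMultilinearMap.mkPiRing ℝ (Fin k) (v k) with hP
  have hvzero : ∀ k, k ∉ Set.range m → v k = 0 := by
    intro k hk
    funext i
    simp only [hv]
    rw [if_neg fun h => hk ⟨i, h⟩]
    rfl
  have hPapp : ∀ k (y : Fin k → ℝ), P k y = (∏ j, y j) • v k := by
    intro k y
    simp [hP, ContinuousMultilinearMap.mkPiRing_apply]
  -- `P` has finitely many nonzero terms, hence infinite radius
  have hrad : P.radius = ⊤ := by
    apply P.radius_eq_top_of_forall_image_add_eq_zero ((Finset.univ.sup m) + 1)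
    intro j
    ext y
    rw [hPapp, hvzero, smul_zero]
    · simp
    · rintro ⟨i, hi⟩
      have : m i ≤ Finset.univ.sup m := Finset.le_sup (Finset.mem_univ i)
      omega
  -- `P` is the power series of `g` at `0`
  have hsum : ∀ y : ℝ, HasSum (fun k => P k fun _ => y) (fun i => y ^ m i) := by
    intro y
    rw [Pi.hasSum]
    intro i
    have : (fun k => (P k fun _ => y) i) = fun k => if k = m i then y ^ m i else 0 := by
      funext k
      rw [hPapp]
      simp only [Finset.prod_const, Finset.card_univ, Fintype.card_fin, Pi.smul_apply, hv,
        smul_eq_mul]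
      by_cases h : m i = k
      · subst h; simp
      · rw [if_neg h, if_neg fun hh => h hh.symm, mul_zero]
    rw [this]
    exact hasSum_ite_eq (m i) (y ^ m i)
  have hgP : HasFPowerSeriesAt (fun t : ℝ => fun i => t ^ m i) P 0 := by
    refine ⟨⊤, ?_, ?_, ?_⟩
    · rw [hrad]
    · exact ENNReal.zero_lt_top
    · intro y _
      simpa using hsum y
  have hg0 : (fun t : ℝ => fun i : Fin n => t ^ m i) 0 = 0 := by
    funext i
    exact zero_pow (hm i).ne'
  have hq' : HasFPowerSeriesAt F q ((fun t : ℝ => fun i : Fin n => t ^ m i) 0) := by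
    rw [hg0]; exact hq
  refine ⟨q.comp P, ?_, ?_⟩
  · have := hq'.comp hgP
    exact this
  · intro k hk
    -- each composition of `k` contains a block outside `Set.range m`
    have key : ∀ c : Composition k, ∃ j : Fin c.length, c.blocksFun j ∉ Set.range m := by
      intro c
      by_contra h
      push_neg at h
      apply hk
      rw [← c.sum_blocksFun]
      exact AddSubmonoid.sum_mem _ fun j _ => AddSubmonoid.subset_closure (h j)
    show (q.comp P) k (fun _ => 1) = 0
    rw [FormalMultilinearSeries.comp, ContinuousMultilinearMap.sum_apply]
    apply Finset.sum_eq_zero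
    intro c _
    obtain ⟨j, hj⟩ := key c
    rw [FormalMultilinearSeries.compAlongComposition_apply]
    apply ContinuousMultilinearMap.map_coord_zero _ j
    show P (c.blocksFun j) _ = 0
    rw [hPapp, hvzero _ hj, smul_zero]
end

section
/- Let K be a field and F ∈ K[[x₁,…,xₙ]] a formal power series such that for every n-tuple of positive integers (m₁,…,mₙ), the power series φ_m(F) ∈ K[[t]] lies in K[[t^{m₁},…,t^{mₙ}]]. Let σ be an elementary monomial substitution on K[[x₁,…,xₙ]]. Then the power series F' = σ(F) also has the property that φ_m(F') lies in K[[t^{m₁},…,t^{mₙ}]] for every n-tuple of positive integers (m₁,…,mₙ). -/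
open Finsupp in
/-- The substitution `φ_m : K[[x₁,…,xₙ]] → K[[t]]`, `xᵢ ↦ t^{mᵢ}` (for `m` with all
`mᵢ ≥ 1`): the coefficient of `t^k` is the sum of the coefficients of `F` over all
exponent vectors `e` with `∑ᵢ eᵢ mᵢ = k`. -/
noncomputable def monomialCurveSubst {K : Type*} [CommRing K] {n : ℕ} (m : Fin n → ℕ)
    (F : MvPowerSeries (Fin n) K) : PowerSeries K :=
  PowerSeries.mk fun k =>
    ∑ e ∈ (Finset.Iic (equivFunOnFinite.symm fun _ : Fin n => k)).filter
        (fun e : Fin n →₀ ℕ => ∑ i, e i * m i = k),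
      MvPowerSeries.coeff (R := K) e F

open scoped Classical in
/-- The `K`-linear substitution of monomials along an (injective) map `T` on exponents:
it sends the monomial `x^e` to `x^{T e}`. -/
noncomputable def exponentSubst {K : Type*} [CommRing K] {n : ℕ}
    (T : (Fin n →₀ ℕ) → (Fin n →₀ ℕ)) (F : MvPowerSeries (Fin n) K) :
    MvPowerSeries (Fin n) K :=
  fun d => if h : ∃ e, T e = d then MvPowerSeries.coeff (R := K) h.choose F else 0

/-- An elementary monomial substitution on `K[[x₁,…,xₙ]]`: the endomorphism induced
either by a permutation of the variables, or (for `r` with 1-based index `1 < r ≤ n`,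
i.e. `0 < (r : ℕ)` in 0-based indexing) by `xᵢ ↦ xᵢxᵣ` for `i < r` and `xᵢ ↦ xᵢ` for
`i ≥ r`; on exponents the latter sends `e` to `e + (∑_{i<r} eᵢ)·δᵣ`. -/
def IsElemMonomialSubst {K : Type*} [CommRing K] {n : ℕ}
    (σ : MvPowerSeries (Fin n) K → MvPowerSeries (Fin n) K) : Prop :=
  (∃ e : Equiv.Perm (Fin n), σ = exponentSubst (Finsupp.equivMapDomain e)) ∨
  (∃ r : Fin n, 0 < (r : ℕ) ∧ σ = exponentSubst
    (fun a => a + Finsupp.single r (∑ i ∈ Finset.univ.filter (fun i => i < r), a i)))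

open Finsupp in
lemma mem_curveFilter_iff {n : ℕ} (m : Fin n → ℕ) (hm : ∀ i, 0 < m i) (k : ℕ)
    (e : Fin n →₀ ℕ) :
    e ∈ (Finset.Iic (equivFunOnFinite.symm fun _ : Fin n => k)).filter
        (fun e : Fin n →₀ ℕ => ∑ i, e i * m i = k) ↔ ∑ i, e i * m i = k := by
  simp only [Finset.mem_filter, Finset.mem_Iic, and_iff_right_iff_imp]
  intro hs
  intro i
  have h1 : e i * m i ≤ k := hs ▸ Finset.single_le_sum (f := fun j => e j * m j) (fun j _ => Nat.zero_le _) (Finset.mem_univ i)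
  have : e i ≤ e i * m i := Nat.le_mul_of_pos_right _ (hm i)
  simpa using this.trans h1

lemma coeff_subst_eq {K : Type*} [CommRing K] {n : ℕ} (m m' : Fin n → ℕ)
    (hm : ∀ i, 0 < m i) (hm' : ∀ i, 0 < m' i)
    (T : (Fin n →₀ ℕ) → (Fin n →₀ ℕ)) (hT : Function.Injective T)
    (hTm : ∀ e, ∑ i, T e i * m i = ∑ i, e i * m' i)
    (F : MvPowerSeries (Fin n) K) (k : ℕ) :
    PowerSeries.coeff (R := K) k (monomialCurveSubst m (exponentSubst T F)) =
    PowerSeries.coeff (R := K) k (monomialCurveSubst m' F) := by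
  classical
  simp only [monomialCurveSubst, PowerSeries.coeff_mk]
  set S := (Finset.Iic (Finsupp.equivFunOnFinite.symm fun _ : Fin n => k)).filter
      (fun e : Fin n →₀ ℕ => ∑ i, e i * m i = k) with hS
  set S' := (Finset.Iic (Finsupp.equivFunOnFinite.symm fun _ : Fin n => k)).filter
      (fun e : Fin n →₀ ℕ => ∑ i, e i * m' i = k) with hS'
  have himg : S'.image T ⊆ S := by
    intro d hd
    obtain ⟨e, he, rfl⟩ := Finset.mem_image.mp hd
    rw [mem_curveFilter_iff m hm]
    rw [hTm]
    exact (mem_curveFilter_iff m' hm' k e).mp he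
  have hzero : ∀ d ∈ S, d ∉ S'.image T → MvPowerSeries.coeff (R := K) d (exponentSubst T F) = 0 := by
    intro d hd hnd
    rw [MvPowerSeries.coeff_apply, exponentSubst]
    rw [dif_neg]
    rintro ⟨e, rfl⟩
    apply hnd
    apply Finset.mem_image_of_mem
    rw [mem_curveFilter_iff m' hm', ← hTm]
    exact (mem_curveFilter_iff m hm k _).mp hd
  rw [← Finset.sum_subset himg hzero, Finset.sum_image (fun a _ b _ h => hT h)]
  apply Finset.sum_congr rfl
  intro e _
  rw [MvPowerSeries.coeff_apply, exponentSubst]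
  rw [dif_pos ⟨e, rfl⟩]
  rw [hT (⟨e, rfl⟩ : ∃ a, T a = T e).choose_spec]

/-- invariance claim in Definition 2 of the paper. If `F ∈ K[[x₁,…,xₙ]]`
satisfies `φ_m(F) ∈ K[[t^{m₁},…,t^{mₙ}]]` for every tuple of positive integers `m`, then so
does `σ(F)` for any elementary monomial substitution `σ`. -/
theorem monomialCurveCondition_invariant_under_elemSubst
    {K : Type*} [Field K] (n : ℕ) (F : MvPowerSeries (Fin n) K)
    (hF : ∀ m : Fin n → ℕ, (∀ i, 0 < m i) →
      ∀ k ∉ AddSubmonoid.closure (Set.range m),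
        PowerSeries.coeff (R := K) k (monomialCurveSubst m F) = 0)
    (σ : MvPowerSeries (Fin n) K → MvPowerSeries (Fin n) K)
    (hσ : IsElemMonomialSubst σ) :
    ∀ m : Fin n → ℕ, (∀ i, 0 < m i) →
      ∀ k ∉ AddSubmonoid.closure (Set.range m),
        PowerSeries.coeff (R := K) k (monomialCurveSubst m (σ F)) = 0 := by
  intro m hm k hk
  rcases hσ with ⟨ε, rfl⟩ | ⟨r, hr, rfl⟩
  · have hT : Function.Injective (Finsupp.equivMapDomain (M := ℕ) ε) :=
      (Finsupp.equivCongrLeft ε).injective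
    have hm' : ∀ i, 0 < (m ∘ ε) i := fun i => hm _
    rw [coeff_subst_eq m (m ∘ ε) hm hm' _ hT ?_ F k]
    · apply hF (m ∘ ε) hm'
      rwa [Set.range_comp, Equiv.range_eq_univ, Set.image_univ]
    · intro a
      simp only [Finsupp.equivMapDomain_apply, Function.comp_apply]
      rw [← Equiv.sum_comp ε (fun i => a (ε.symm i) * m i)]
      simp
  · set c : (Fin n →₀ ℕ) → ℕ := fun a => ∑ i ∈ Finset.univ.filter (fun i => i < r), a i with hc
    set T : (Fin n →₀ ℕ) → (Fin n →₀ ℕ) := fun a => a + Finsupp.single r (c a) with hTdef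
    set m' : Fin n → ℕ := fun i => if i < r then m i + m r else m i with hm'def
    have hm' : ∀ i, 0 < m' i := by
      intro i; simp only [hm'def]; split
      · exact Nat.add_pos_left (hm i) _
      · exact hm i
    have hT : Function.Injective T := by
      intro a b h
      have hne : ∀ i, i ≠ r → a i = b i := by
        intro i hi
        have := DFunLike.congr_fun h i
        simpa [hTdef, Finsupp.single_apply, (Ne.symm hi)] using this
      have hcc : c a = c b := by
        apply Finset.sum_congr rfl
        intro i hi
        exact hne i (ne_of_lt (Finset.mem_filter.mp hi).2)
      ext i
      by_cases hi : i = r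
      · subst hi
        have := DFunLike.congr_fun h i
        simp only [hTdef, Finsupp.add_apply, Finsupp.single_apply, if_pos rfl, hcc] at this
        omega
      · exact hne i hi
    rw [coeff_subst_eq m m' hm hm' T hT ?_ F k]
    · apply hF m' hm'
      intro hk'
      apply hk
      refine AddSubmonoid.closure_le.mpr ?_ hk'
      rintro x ⟨i, rfl⟩
      by_cases hi : i < r
      · simp only [hm'def, if_pos hi]
        exact AddSubmonoid.add_mem _ (AddSubmonoid.subset_closure ⟨i, rfl⟩)
          (AddSubmonoid.subset_closure ⟨r, rfl⟩)
      · simp only [hm'def, if_neg hi]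
        exact AddSubmonoid.subset_closure ⟨i, rfl⟩
    · intro a
      have h1 : ∑ i, Finsupp.single r (c a) i * m i = c a * m r := by
        simp [Finsupp.single_apply, ite_mul]
      have h2 : ∀ i, a i * m' i = a i * m i + (if i < r then a i * m r else 0) := by
        intro i; simp only [hm'def, mul_ite]; split <;> ring
      simp only [hTdef, Finsupp.add_apply, add_mul, Finset.sum_add_distrib, h1, h2,
        ← Finset.sum_filter, hc, Finset.sum_mul]
      rw [← Finset.sum_mul]
      exact congrArg (_ + ·) h1
end

section
/- Let n ≥ 2 and 1 < r ≤ n. Let a = (a₁,…,aₙ) ∈ ℕⁿ satisfy aᵣ < a₁ + ⋯ + a_{r−1}. Let m' = (m'₁,…,m'ₙ) be positive integers such that the only c ∈ ℕⁿ with Σᵢ cᵢm'ᵢ = Σᵢ aᵢm'ᵢ is c = a. Define mᵢ = m'ᵢ + m'ᵣ for 1 ≤ i ≤ r−1 and mᵢ = m'ᵢ for r ≤ i ≤ n. Then the integer Σᵢ aᵢm'ᵢ does not belong to the additive submonoid of ℕ generated by m₁,…,mₙ; that is, there is no c ∈ ℕⁿ with Σᵢ cᵢmᵢ = Σᵢ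 aᵢm'ᵢ. -/
/-- The arithmetic core of Step 3 of the proof of Theorem 1.
Indices are 0-based: the 1-indexed coordinate `r` with `1 < r ≤ n` corresponds to
`r : Fin n` with `0 < (r : ℕ)`, and `a₁ + ⋯ + a_{r−1}` is the sum of `a i` over `i < r`. -/
theorem monomial_curve_failure
    (n : ℕ) (hn : 2 ≤ n) (r : Fin n) (hr : 0 < (r : ℕ))
    (a : Fin n → ℕ)
    (ha : a r < ∑ i ∈ Finset.univ.filter (fun i => i < r), a i)
    (m' : Fin n → ℕ) (hm' : ∀ i, 0 < m' i)
    (huniq : ∀ c : Fin n → ℕ, ∑ i, c i * m' i = ∑ i, a i * m' i → c = a)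
    (m : Fin n → ℕ)
    (hm : ∀ i, m i = if i < r then m' i + m' r else m' i) :
    ¬ ∃ c : Fin n → ℕ, ∑ i, c i * m i = ∑ i, a i * m' i := by
  rintro ⟨c, hc⟩
  set S := ∑ i ∈ Finset.univ.filter (fun i => i < r), c i with hS
  have hsplit : ∑ i, c i * m i = ∑ i, c i * m' i + S * m' r := by
    have : ∀ i : Fin n, c i * m i
        = c i * m' i + (if i < r then c i * m' r else 0) := by
      intro i
      rw [hm i]
      split <;> ring
    rw [Finset.sum_congr rfl (fun i _ => this i), Finset.sum_add_distrib,
      ← Finset.sum_filter, ← Finset.sum_mul]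
  have key : ∑ i, (if i = r then c i + S else c i) * m' i = ∑ i, a i * m' i := by
    have : ∀ i : Fin n, (if i = r then c i + S else c i) * m' i
        = c i * m' i + (if i = r then S * m' r else 0) := by
      intro i
      split
      · subst ‹i = r›; ring
      · ring
    rw [Finset.sum_congr rfl (fun i _ => this i), Finset.sum_add_distrib,
      Finset.sum_ite_eq' Finset.univ r, if_pos (Finset.mem_univ r), ← hsplit, hc]
  have hd := huniq _ key
  have har : c r + S = a r := by
    have := congrFun hd r
    simpa using this
  have hci : ∀ i : Fin n, i < r → c i = a i := by
    intro i hi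
    have := congrFun hd i
    simpa [ne_of_lt hi] using this
  have hSa : S = ∑ i ∈ Finset.univ.filter (fun i => i < r), a i :=
    Finset.sum_congr rfl (fun i hi => hci i (Finset.mem_filter.mp hi).2)
  omega
end

section
/- Let a₁,…,aₙ be positive integers. Then there exist pairwise distinct prime numbers m₁,…,mₙ such that the only tuple (c₁,…,cₙ) ∈ ℕⁿ with Σᵢ cᵢmᵢ = Σᵢ aᵢmᵢ is cᵢ = aᵢ for all i. -/
open Finset

/-- our own prime counting function: number of primes ≤ x -/
def ppi (x : ℕ) : ℕ := ((Finset.range (x+1)).filter Nat.Prime).card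

lemma centralBinom_le_pow (n : ℕ) (hn : 0 < n) :
    Nat.centralBinom n ≤ (2*n) ^ ppi (2*n) := by
  rw [← Nat.prod_pow_factorization_centralBinom n]
  have h1 : (∏ p ∈ Finset.range (2*n+1), p ^ (Nat.centralBinom n).factorization p)
      = ∏ p ∈ (Finset.range (2*n+1)).filter Nat.Prime,
          p ^ (Nat.centralBinom n).factorization p := by
    rw [Finset.prod_filter]
    apply Finset.prod_congr rfl
    intro p _
    by_cases hp : p.Prime
    · simp [hp]
    · simp [hp, Nat.factorization_eq_zero_of_not_prime _ hp]
  rw [h1, ppi]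
  calc ∏ p ∈ (Finset.range (2*n+1)).filter Nat.Prime,
          p ^ (Nat.centralBinom n).factorization p
      ≤ ∏ _p ∈ (Finset.range (2*n+1)).filter Nat.Prime, (2*n) := by
        apply Finset.prod_le_prod'
        intro p _
        exact Nat.pow_factorization_choose_le (by omega)
    _ = (2*n) ^ ((Finset.range (2*n+1)).filter Nat.Prime).card := by
        rw [Finset.prod_const]

lemma cheb_lower (n : ℕ) (hn : 4 ≤ n) :
    2*n < (Nat.clog 2 (2*n)) * (ppi (2*n) + 1) := by
  have h1 : 4^n < n * Nat.centralBinom n := Nat.four_pow_lt_mul_centralBinom n hn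
  have h2 : n * Nat.centralBinom n ≤ (2*n) ^ (ppi (2*n) + 1) := by
    rw [pow_succ, mul_comm ((2*n)^(ppi (2*n)))]
    exact Nat.mul_le_mul (by omega) (centralBinom_le_pow n (by omega))
  have h3 : (2*n : ℕ) ≤ 2 ^ (Nat.clog 2 (2*n)) := Nat.le_pow_clog (by norm_num) _
  have h4 : (4:ℕ)^n < 2 ^ (Nat.clog 2 (2*n) * (ppi (2*n) + 1)) := by
    calc (4:ℕ)^n < (2*n) ^ (ppi (2*n) + 1) := lt_of_lt_of_le h1 h2
      _ ≤ (2 ^ (Nat.clog 2 (2*n))) ^ (ppi (2*n) + 1) := Nat.pow_le_pow_left h3 _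
      _ = 2 ^ (Nat.clog 2 (2*n) * (ppi (2*n) + 1)) := by rw [← pow_mul]
  have h5 : (4:ℕ)^n = 2^(2*n) := by
    rw [show (4:ℕ) = 2^2 by norm_num, ← pow_mul]
  rw [h5] at h4
  exact (Nat.pow_lt_pow_iff_right (by norm_num)).mp h4

lemma ppi_double (N : ℕ) :
    ppi (2*N) = ppi N + ((Finset.Ioc N (2*N)).filter Nat.Prime).card := by
  unfold ppi
  rw [← Finset.card_union_of_disjoint]
  · congr 1
    rw [← Finset.filter_union]
    congr 1
    ext x
    simp only [Finset.mem_union, Finset.mem_range, Finset.mem_Ioc]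
    omega
  · exact Finset.disjoint_left.mpr (by intro x h1 h2; simp at h1 h2 ⊢; omega)

lemma sq_lt_four_pow : ∀ m, 10 ≤ m → (3*m+1)^2 < 4^m := by
  intro m hm
  induction m, hm using Nat.le_induction with
  | base => norm_num
  | succ m hm ih =>
    have h4 : (4:ℕ)^(m+1) = 4 * 4^m := by ring
    rw [h4]
    nlinarith [ih, hm]

lemma poly_lt_two_pow (a b c : ℕ) : ∃ j, 1 ≤ j ∧ (a+j)*(b+j*c) < 2^j := by
  set K := (a+1)*(b+c+1) with hK
  set K' := max K 10 with hK'
  refine ⟨3*K', by omega, ?_⟩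
  have h1 : (a + 3*K') ≤ (a+1)*(3*K'+1) := by nlinarith
  have h2 : (b + (3*K')*c) ≤ (b+c+1)*(3*K'+1) := by nlinarith
  have h3 : (a + 3*K')*(b + 3*K'*c) ≤ K * (3*K'+1)^2 := by
    calc (a + 3*K')*(b + 3*K'*c) ≤ ((a+1)*(3*K'+1)) * ((b+c+1)*(3*K'+1)) :=
          Nat.mul_le_mul h1 h2
      _ = K * (3*K'+1)^2 := by ring
  have h4 : K < 2^K' := lt_of_le_of_lt (le_max_left _ _) (Nat.lt_two_pow_self (n := K'))
  have h5 : (3*K'+1)^2 < 4^K' := sq_lt_four_pow K' (le_max_right _ _)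
  calc (a + 3*K')*(b + 3*K'*c) ≤ K * (3*K'+1)^2 := h3
    _ < 2^K' * 4^K' := by
        apply Nat.mul_lt_mul_of_lt_of_le h4 h5.le
        positivity
    _ = 2^(3*K') := by
        rw [show (4:ℕ) = 2^2 by norm_num, ← pow_mul, ← pow_add]
        congr 1
        ring

lemma many_primes_in_window (k N₀ : ℕ) :
    ∃ N, N₀ ≤ N ∧ k ≤ ((Finset.Ioc N (2*N)).filter Nat.Prime).card := by
  by_contra h
  push_neg at h
  set M := max N₀ 4 with hM
  have hM4 : 4 ≤ M := le_max_right _ _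
  have hdbl : ∀ j, ppi (M * 2^j) ≤ ppi M + j * k := by
    intro j
    induction j with
    | zero => simp
    | succ j ih =>
      have h1 : M * 2^(j+1) = 2 * (M * 2^j) := by ring
      rw [h1, ppi_double]
      have h2 : ((Finset.Ioc (M*2^j) (2*(M*2^j))).filter Nat.Prime).card < k := by
        apply h
        calc N₀ ≤ M := le_max_left _ _
          _ ≤ M * 2^j := Nat.le_mul_of_pos_right _ (by positivity)
      calc ppi (M*2^j) + ((Finset.Ioc (M*2^j) (2*(M*2^j))).filter Nat.Prime).card
          ≤ (ppi M + j*k) + k := by omega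
        _ = ppi M + (j+1)*k := by ring
  obtain ⟨j, hj1, hj2⟩ := poly_lt_two_pow (Nat.clog 2 M) (ppi M + 1) k
  -- apply chebyshev at n = M * 2^(j-1)
  set n := M * 2^(j-1) with hn
  have h2n : 2 * n = M * 2^j := by
    rw [hn, ← mul_assoc, mul_comm 2 M, mul_assoc, ← pow_succ']
    congr 2
    omega
  have hn4 : 4 ≤ n := le_trans hM4 (Nat.le_mul_of_pos_right _ (by positivity))
  have hcheb := cheb_lower n hn4
  rw [h2n] at hcheb
  have hclog : Nat.clog 2 (M * 2^j) ≤ Nat.clog 2 M + j := by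
    have h1 : M * 2^j ≤ 2^(Nat.clog 2 M + j) := by
      rw [pow_add]
      exact Nat.mul_le_mul_right _ (Nat.le_pow_clog (by norm_num) _)
    calc Nat.clog 2 (M * 2^j) ≤ Nat.clog 2 (2^(Nat.clog 2 M + j)) :=
          Nat.clog_mono_right _ h1
      _ = Nat.clog 2 M + j := Nat.clog_pow _ _ (by norm_num)
  have hfinal : M * 2^j < (Nat.clog 2 M + j) * ((ppi M + 1) + j * k) := by
    calc M * 2^j < Nat.clog 2 (M*2^j) * (ppi (M*2^j) + 1) := hcheb
      _ ≤ (Nat.clog 2 M + j) * ((ppi M + 1) + j * k) := by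
          apply Nat.mul_le_mul hclog
          have := hdbl j
          omega
  have h2j : 2^j ≤ M * 2^j := Nat.le_mul_of_pos_left _ (by omega)
  omega


open Finset

lemma exists_relfree (n B : ℕ) (W : Finset ℕ)
    (hW : (2*B+1)^n * B + n ≤ W.card) :
    ∀ k, k ≤ n → ∃ p : Fin k → ℕ, (∀ i, p i ∈ W) ∧ Function.Injective p ∧
      ∀ d : Fin k → ℤ, (∀ i, |d i| ≤ (B:ℤ)) → (∑ i, d i * p i = 0) → ∀ i, d i = 0 := by
  intro k
  induction k with
  | zero =>
    intro _
    exact ⟨fun i => i.elim0, fun i => i.elim0, fun i => i.elim0, fun d _ _ i => i.elim0⟩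
  | succ k ih =>
    intro hk
    obtain ⟨p, hpW, hpinj, hprel⟩ := ih (by omega)
    set f : (Fin k → ℤ) × ℕ → ℕ :=
      fun de => ((∑ i, de.1 i * p i) / (de.2 : ℤ)).toNat with hf
    set Bad : Finset ℕ :=
      Finset.image f ((Fintype.piFinset fun _ : Fin k => Finset.Icc (-(B:ℤ)) B) ×ˢ
        Finset.Icc 1 B) with hBad
    set prev : Finset ℕ := Finset.image p Finset.univ with hprev
    have hIcc : (Finset.Icc (-(B:ℤ)) B).card = 2*B+1 := by
      rw [Int.card_Icc]; omega
    have hBadcard : Bad.card ≤ (2*B+1)^k * B := by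
      calc Bad.card ≤ ((Fintype.piFinset fun _ : Fin k => Finset.Icc (-(B:ℤ)) B) ×ˢ
            Finset.Icc 1 B).card := Finset.card_image_le
        _ = (2*B+1)^k * B := by
            rw [Finset.card_product, Fintype.card_piFinset]
            simp [hIcc, Finset.prod_const]
    have hprevcard : prev.card ≤ k := by
      calc prev.card ≤ (Finset.univ : Finset (Fin k)).card := Finset.card_image_le
        _ = k := by simp
    have hne : (W \ (Bad ∪ prev)).Nonempty := by
      rw [← Finset.card_pos]
      have h1 : (Bad ∪ prev).card ≤ Bad.card + prev.card := Finset.card_union_le _ _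
      have h2 : (2*B+1)^k ≤ (2*B+1)^n := Nat.pow_le_pow_right (by omega) (by omega)
      have h2' : (2*B+1)^k * B ≤ (2*B+1)^n * B := Nat.mul_le_mul_right B h2
      have h3 : W.card ≤ (W \ (Bad ∪ prev)).card + (Bad ∪ prev).card :=
        Finset.card_le_card_sdiff_add_card
      omega
    obtain ⟨q, hq⟩ := hne
    rw [Finset.mem_sdiff, Finset.mem_union] at hq
    obtain ⟨hqW, hqBad⟩ := hq
    push_neg at hqBad
    obtain ⟨hqB, hqprev⟩ := hqBad
    refine ⟨Fin.snoc p q, ?_, ?_, ?_⟩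
    · intro i
      refine Fin.lastCases ?_ ?_ i
      · rw [Fin.snoc_last]; exact hqW
      · intro j; rw [Fin.snoc_castSucc]; exact hpW j
    · intro i j hij
      rcases Fin.eq_castSucc_or_eq_last i with ⟨i', rfl⟩ | rfl <;>
        rcases Fin.eq_castSucc_or_eq_last j with ⟨j', rfl⟩ | rfl
      · rw [Fin.snoc_castSucc, Fin.snoc_castSucc] at hij
        exact congrArg _ (hpinj hij)
      · rw [Fin.snoc_castSucc, Fin.snoc_last] at hij
        exact absurd (hij ▸ Finset.mem_image_of_mem p (Finset.mem_univ i')) hqprev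
      · rw [Fin.snoc_castSucc, Fin.snoc_last] at hij
        exact absurd (hij.symm ▸ Finset.mem_image_of_mem p (Finset.mem_univ j')) hqprev
      · rfl
    · intro d hd hsum
      have hsum' : (∑ i : Fin k, d i.castSucc * p i) + d (Fin.last k) * q = 0 := by
        rw [Fin.sum_univ_castSucc] at hsum
        simpa using hsum
      by_cases hlast : d (Fin.last k) = 0
      · have h0 : ∑ i : Fin k, d i.castSucc * p i = 0 := by
          rw [hlast] at hsum'; simpa using hsum'
        have hz := hprel (fun i => d i.castSucc) (fun i => hd _) h0
        intro i
        refine Fin.lastCases hlast (fun j => hz j) i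
      · exfalso
        set e : ℕ := (d (Fin.last k)).natAbs with he
        have he1 : 1 ≤ e := Int.natAbs_pos.mpr hlast
        have heB : e ≤ B := by
          have h1 : ((d (Fin.last k)).natAbs : ℤ) ≤ B := by
            rw [Int.natCast_natAbs]; exact hd _
          exact_mod_cast h1
        have heZ : (e:ℤ) ≠ 0 := Int.natCast_ne_zero.mpr (by omega)
        have main : ∀ dd : Fin k → ℤ, (∀ i, |dd i| ≤ (B:ℤ)) →
            ((e:ℤ) * q = ∑ i : Fin k, dd i * p i) → False := by
          intro dd hddB hkey
          have hmem : (dd, e) ∈ ((Fintype.piFinset fun _ : Fin k => Finset.Icc (-(B:ℤ)) B) ×ˢ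
              Finset.Icc 1 B) := by
            rw [Finset.mem_product]
            refine ⟨?_, Finset.mem_Icc.mpr ⟨he1, heB⟩⟩
            rw [Fintype.mem_piFinset]
            intro i
            rw [Finset.mem_Icc]
            have := hddB i
            rw [abs_le] at this
            exact this
          have hfq : f (dd, e) = q := by
            show ((∑ i : Fin k, dd i * p i) / (e:ℤ)).toNat = q
            rw [← hkey, Int.mul_ediv_cancel_left _ heZ]
            simp
          exact hqB (Finset.mem_image.mpr ⟨(dd, e), hmem, hfq⟩)
        rcases le_or_gt 0 (d (Fin.last k)) with hpos | hneg
        · refine main (fun i => -(d i.castSucc)) (fun i => by rw [abs_neg]; exact hd _) ?_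
          have h1 : (e:ℤ) = d (Fin.last k) := Int.natAbs_of_nonneg hpos
          have h2 : ∑ i : Fin k, (-(d i.castSucc)) * (p i : ℤ)
              = -∑ i : Fin k, d i.castSucc * p i := by
            simp [neg_mul]
          rw [h1, h2]
          linarith [hsum']
        · refine main (fun i => d i.castSucc) (fun i => hd _) ?_
          have h1 : (e:ℤ) = -d (Fin.last k) := Int.ofNat_natAbs_of_nonpos (by omega)
          rw [h1]
          linarith [hsum']


/-- Remark 3 of the paper. For positive integers `a₁, …, aₙ` there exist
pairwise distinct primes `m₁, …, mₙ` such that the only `c ∈ ℕⁿ` with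
`∑ cᵢ mᵢ = ∑ aᵢ mᵢ` is `c = a`. -/
theorem exists_prime_weights_unique_representation
    (n : ℕ) (a : Fin n → ℕ) (ha : ∀ i, 0 < a i) :
    ∃ m : Fin n → ℕ, (∀ i, Nat.Prime (m i)) ∧ Function.Injective m ∧
      ∀ c : Fin n → ℕ, ∑ i, c i * m i = ∑ i, a i * m i → c = a := by
  classical
  set A : ℕ := ∑ i, a i with hA
  set B : ℕ := 3 * A with hB
  obtain ⟨N, hN1, hNcard⟩ := many_primes_in_window ((2*B+1)^n * B + n) 1
  set W : Finset ℕ := (Finset.Ioc N (2*N)).filter Nat.Prime with hW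
  obtain ⟨p, hpW, hpinj, hprel⟩ := exists_relfree n B W hNcard n le_rfl
  have hpfacts : ∀ i, Nat.Prime (p i) ∧ N < p i ∧ p i ≤ 2*N := by
    intro i
    have := hpW i
    rw [hW, Finset.mem_filter, Finset.mem_Ioc] at this
    exact ⟨this.2, this.1.1, this.1.2⟩
  refine ⟨p, fun i => (hpfacts i).1, hpinj, ?_⟩
  intro c hc
  -- bound on the a i and total sum
  have haA : ∀ i, a i ≤ A := by
    intro i
    exact Finset.single_le_sum (fun j _ => Nat.zero_le (a j)) (Finset.mem_univ i)
  have hS : ∑ i, a i * p i ≤ A * (2*N) := by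
    calc ∑ i, a i * p i ≤ ∑ i, a i * (2*N) :=
          Finset.sum_le_sum fun i _ => Nat.mul_le_mul_left _ (hpfacts i).2.2
      _ = A * (2*N) := by rw [← Finset.sum_mul]
  have hcB : ∀ i, c i ≤ 2*A := by
    intro i
    by_contra hcon
    push_neg at hcon
    have h1 : c i * p i ≤ ∑ j, c j * p j :=
      Finset.single_le_sum (f := fun j => c j * p j) (fun j _ => Nat.zero_le _)
        (Finset.mem_univ i)
    rw [hc] at h1
    have h2 : (2*A+1) * (N+1) ≤ c i * p i :=
      Nat.mul_le_mul hcon (hpfacts i).2.1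
    nlinarith [hS]
  -- the integer relation
  set d : Fin n → ℤ := fun i => (c i : ℤ) - (a i : ℤ) with hd
  have hdB : ∀ i, |d i| ≤ (B:ℤ) := by
    intro i
    rw [abs_le, hd]
    have h1 := hcB i
    have h2 := haA i
    constructor <;> simp only [hB] <;> push_cast <;> omega
  have hdsum : ∑ i, d i * p i = 0 := by
    have h1 : ∑ i, d i * (p i : ℤ)
        = (∑ i, c i * p i : ℕ) - (∑ i, a i * p i : ℕ) := by
      push_cast
      rw [← Finset.sum_sub_distrib]
      exact Finset.sum_congr rfl fun i _ => by ring
    rw [h1, hc, sub_self]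
  have hz := hprel d hdB hdsum
  funext i
  have h2 : (c i : ℤ) - (a i : ℤ) = 0 := hz i
  omega
end

section
/- Let a = (a₁,…,aₙ) ∈ ℕⁿ and let s₁,…,sₙ be positive real numbers that are linearly independent over ℚ. Then there exists ε > 0 such that for every s' = (s'₁,…,s'ₙ) with each s'ᵢ > 0 and |s'ᵢ − sᵢ| < ε for all i, the only c ∈ ℕⁿ with Σᵢ cᵢs'ᵢ = Σᵢ aᵢs'ᵢ is c = a. -/
/-- stability claim in Remark 3 of the paper. If `s₁, …, sₙ` are positive
reals, linearly independent over `ℚ`, and `a ∈ ℕⁿ`, then for every sufficiently small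
perturbation `s'` of `s` with positive entries, the only `c ∈ ℕⁿ` with
`∑ cᵢ s'ᵢ = ∑ aᵢ s'ᵢ` is `c = a`. -/
theorem unique_representation_stable_under_perturbation
    (n : ℕ) (a : Fin n → ℕ) (s : Fin n → ℝ)
    (hs : ∀ i, 0 < s i) (hind : LinearIndependent ℚ s) :
    ∃ ε > (0 : ℝ), ∀ s' : Fin n → ℝ, (∀ i, 0 < s' i) → (∀ i, |s' i - s i| < ε) →
      ∀ c : Fin n → ℕ, ∑ i, (c i : ℝ) * s' i = ∑ i, (a i : ℝ) * s' i → c = a := by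
  classical
  rcases Nat.eq_zero_or_pos n with hn | hn
  · subst hn
    exact ⟨1, one_pos, fun s' _ _ c _ => funext fun i => i.elim0⟩
  haveI : Nonempty (Fin n) := Fin.pos_iff_nonempty.mp hn
  -- key injectivity from linear independence
  have hkey : ∀ c : Fin n → ℕ, (∑ i, ((c i : ℝ) - (a i : ℝ)) * s i) = 0 → c = a := by
    intro c hc
    have h0 : ∀ i, ((c i : ℚ) - (a i : ℚ)) = 0 := by
      apply Fintype.linearIndependent_iff.mp hind (fun i => (c i : ℚ) - (a i : ℚ))
      have heq : ∑ i, ((c i : ℚ) - (a i : ℚ)) • s i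
          = ∑ i, ((c i : ℝ) - (a i : ℝ)) * s i := by
        refine Finset.sum_congr rfl fun i _ => ?_
        rw [Rat.smul_def]
        push_cast
        ring
      rw [heq, hc]
    funext i
    have := sub_eq_zero.mp (h0 i)
    exact_mod_cast this
  set m : ℝ := Finset.univ.inf' Finset.univ_nonempty s with hm
  have hmpos : 0 < m := by
    rw [hm, Finset.lt_inf'_iff]
    exact fun i _ => hs i
  have hmle : ∀ i, m ≤ s i := fun i => Finset.inf'_le s (Finset.mem_univ i)
  set T : ℝ := ∑ i, (a i : ℝ) * s i with hTdef
  set A : ℝ := ∑ i, (a i : ℝ) with hAdef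
  have hA : 0 ≤ A := Finset.sum_nonneg fun i _ => Nat.cast_nonneg _
  have hT : 0 ≤ T := Finset.sum_nonneg fun i _ => mul_nonneg (Nat.cast_nonneg _) (hs i).le
  set K : ℕ := ⌈2 * (T + A + 1) / m⌉₊ with hKdef
  set cand : Finset (Fin n → ℕ) := Fintype.piFinset (fun _ => Finset.range (K + 1)) with hcand
  set bad : Finset (Fin n → ℕ) := cand.filter (· ≠ a) with hbad
  set gap : (Fin n → ℕ) → ℝ := fun c => |∑ i, ((c i : ℝ) - (a i : ℝ)) * s i| with hgapdef
  set B : Finset ℝ := insert 1 (bad.image gap) with hB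
  have hBne : B.Nonempty := ⟨1, Finset.mem_insert_self _ _⟩
  set δ : ℝ := B.min' hBne with hδ
  have hδpos : 0 < δ := by
    rw [hδ, Finset.lt_min'_iff]
    intro y hy
    rcases Finset.mem_insert.mp hy with h | h
    · simp [h]
    · obtain ⟨c, hc, rfl⟩ := Finset.mem_image.mp h
      have hcne : c ≠ a := (Finset.mem_filter.mp hc).2
      have hne : ∑ i, ((c i : ℝ) - (a i : ℝ)) * s i ≠ 0 := fun h => hcne (hkey c h)
      exact abs_pos.mpr hne
  have hδ1 : δ ≤ 1 := Finset.min'_le _ _ (Finset.mem_insert_self _ _)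
  set D : ℝ := n * K + A + n + 1 with hD
  have hDpos : (0 : ℝ) < D := by positivity
  have hD1 : 1 ≤ D := by
    have : (0:ℝ) ≤ n * K := by positivity
    have hn' : (0:ℝ) ≤ n := by positivity
    nlinarith
  set ε : ℝ := min (m / 2) (δ / D) with hε
  have hεpos : 0 < ε := lt_min (by positivity) (by positivity)
  refine ⟨ε, hεpos, ?_⟩
  intro s' hs' hclose c hsum
  by_contra hca
  have hεm : ε ≤ m / 2 := min_le_left _ _
  have hεδ : ε ≤ δ / D := min_le_right _ _
  have hε1 : ε ≤ 1 := by
    refine hεδ.trans ?_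
    rw [div_le_one hDpos]
    linarith
  have hs'ge : ∀ i, m / 2 ≤ s' i := by
    intro i
    have h := (abs_lt.mp (hclose i)).1
    have := hmle i
    linarith
  have hub : ∑ i, (a i : ℝ) * s' i ≤ T + A := by
    have hstep : ∀ i, (a i : ℝ) * s' i ≤ (a i : ℝ) * s i + (a i : ℝ) * 1 := by
      intro i
      have h := (abs_lt.mp (hclose i)).2
      nlinarith [(Nat.cast_nonneg (a i) : (0:ℝ) ≤ (a i : ℝ))]
    calc ∑ i, (a i : ℝ) * s' i ≤ ∑ i, ((a i : ℝ) * s i + (a i : ℝ) * 1) :=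
          Finset.sum_le_sum fun i _ => hstep i
      _ = T + A := by rw [Finset.sum_add_distrib]; simp [hTdef, hAdef]
  have hcK : ∀ i, c i ≤ K := by
    intro i
    have h1 : (c i : ℝ) * s' i ≤ ∑ j, (c j : ℝ) * s' j := by
      refine Finset.single_le_sum (f := fun j => (c j : ℝ) * s' j) (fun j _ => ?_) (Finset.mem_univ i)
      exact mul_nonneg (Nat.cast_nonneg _) (hs' j).le
    have h2 : (c i : ℝ) * (m / 2) ≤ T + A := by
      calc (c i : ℝ) * (m / 2) ≤ (c i : ℝ) * s' i :=
            mul_le_mul_of_nonneg_left (hs'ge i) (Nat.cast_nonneg _)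
        _ ≤ ∑ j, (c j : ℝ) * s' j := h1
        _ = ∑ j, (a j : ℝ) * s' j := hsum
        _ ≤ T + A := hub
    have h3 : (c i : ℝ) ≤ 2 * (T + A + 1) / m := by
      rw [le_div_iff₀ hmpos]
      nlinarith
    have h4 : (c i : ℝ) ≤ (K : ℝ) := h3.trans (Nat.le_ceil _)
    exact_mod_cast h4
  have hcmem : c ∈ bad := by
    refine Finset.mem_filter.mpr ⟨?_, hca⟩
    rw [hcand, Fintype.mem_piFinset]
    intro i
    exact Finset.mem_range.mpr (Nat.lt_succ_of_le (hcK i))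
  have hgap : δ ≤ gap c :=
    Finset.min'_le _ _ (Finset.mem_insert_of_mem (Finset.mem_image_of_mem _ hcmem))
  have hzero : ∑ i, ((c i : ℝ) - (a i : ℝ)) * s' i = 0 := by
    have : ∑ i, ((c i : ℝ) - (a i : ℝ)) * s' i
        = ∑ i, (c i : ℝ) * s' i - ∑ i, (a i : ℝ) * s' i := by
      rw [← Finset.sum_sub_distrib]
      exact Finset.sum_congr rfl fun i _ => by ring
    rw [this, hsum, sub_self]
  have hdecomp : ∑ i, ((c i : ℝ) - (a i : ℝ)) * s i
      = ∑ i, ((c i : ℝ) - (a i : ℝ)) * s' i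
        + ∑ i, ((c i : ℝ) - (a i : ℝ)) * (s i - s' i) := by
    rw [← Finset.sum_add_distrib]
    exact Finset.sum_congr rfl fun i _ => by ring
  have hsumc : ∑ i, (c i : ℝ) ≤ n * K := by
    calc ∑ i, (c i : ℝ) ≤ ∑ _i : Fin n, (K : ℝ) :=
          Finset.sum_le_sum fun i _ => by exact_mod_cast hcK i
      _ = n * K := by simp [mul_comm]
  have herr : |∑ i, ((c i : ℝ) - (a i : ℝ)) * (s i - s' i)| ≤ ε * (n * K + A) := by
    calc |∑ i, ((c i : ℝ) - (a i : ℝ)) * (s i - s' i)|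
        ≤ ∑ i, |((c i : ℝ) - (a i : ℝ)) * (s i - s' i)| :=
          Finset.abs_sum_le_sum_abs _ _
      _ ≤ ∑ i, ((c i : ℝ) + (a i : ℝ)) * ε := by
          refine Finset.sum_le_sum fun i _ => ?_
          rw [abs_mul]
          have h1 : |(c i : ℝ) - (a i : ℝ)| ≤ (c i : ℝ) + (a i : ℝ) := by
            refine (abs_sub _ _).trans ?_
            rw [abs_of_nonneg (Nat.cast_nonneg _), abs_of_nonneg (Nat.cast_nonneg _)]
          have h2 : |s i - s' i| ≤ ε := by
            rw [abs_sub_comm]; exact (hclose i).le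
          exact mul_le_mul h1 h2 (abs_nonneg _) (by positivity)
      _ = (∑ i, ((c i : ℝ) + (a i : ℝ))) * ε := by rw [Finset.sum_mul]
      _ ≤ (n * K + A) * ε := by
          refine mul_le_mul_of_nonneg_right ?_ hεpos.le
          rw [Finset.sum_add_distrib]
          have := hsumc
          rw [hAdef]
          linarith
      _ = ε * (n * K + A) := mul_comm _ _
  have hfinal : gap c < δ := by
    have hge : gap c ≤ ε * (n * K + A) := by
      rw [hgapdef]
      simp only
      rw [hdecomp, hzero, zero_add]
      exact herr
    have hlt : ε * (n * K + A) < ε * D := by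
      apply mul_lt_mul_of_pos_left _ hεpos
      rw [hD]
      have hn' : (1:ℝ) ≤ n := by exact_mod_cast hn
      linarith
    have hle : ε * D ≤ δ := by
      rw [← le_div_iff₀ hDpos]
      exact hεδ
    linarith
  linarith
end

section
/- Let K be a field and J ⊆ K[x₁,…,xₙ] a nonzero ideal generated by monomials. Then there exists a finite composite σ̄ of elementary monomial substitutions on K[x₁,…,xₙ] such that the ideal of K[x₁,…,xₙ] generated by σ̄(J) is a principal ideal generated by a single monomial. -/
/-- An elementary monomial substitution on `K[x₁,…,xₙ]`: the `K`-algebra endomorphism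
induced either by a permutation of the variables, or (for `r` with 1-based index
`1 < r ≤ n`, i.e. `0 < (r : ℕ)` in 0-based indexing) by `xᵢ ↦ xᵢxᵣ` for `i < r` and
`xᵢ ↦ xᵢ` for `i ≥ r`. -/
def IsElemMonomialSubstPoly {K : Type*} [CommSemiring K] {n : ℕ}
    (σ : MvPolynomial (Fin n) K →ₐ[K] MvPolynomial (Fin n) K) : Prop :=
  (∃ e : Equiv.Perm (Fin n), σ = MvPolynomial.rename e) ∨
  (∃ r : Fin n, 0 < (r : ℕ) ∧ σ = MvPolynomial.aeval
    (fun i => if i < r then MvPolynomial.X i * MvPolynomial.X r else MvPolynomial.X i))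

namespace MonomialPrincipalization

open MvPolynomial

variable {n : ℕ}

/-- The exponent move: add the value at `i` to coordinate `j`. -/
noncomputable def moveT (i j : Fin n) (a : Fin n →₀ ℕ) : Fin n →₀ ℕ :=
  a + Finsupp.single j (a i)

/-- The exponent action of the elementary substitution `xᵢ ↦ xᵢxᵣ` for `i < r`. -/
noncomputable def elemT (r : Fin n) (d : Fin n →₀ ℕ) : Fin n →₀ ℕ :=
  d + Finsupp.single r (∑ i ∈ Finset.univ.filter (fun i : Fin n => i < r), d i)

/-- The exponent action of a permutation of the variables. -/
noncomputable def permT (π : Equiv.Perm (Fin n)) (d : Fin n →₀ ℕ) : Fin n →₀ ℕ :=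
  Finsupp.equivMapDomain π d

/-- Exponent transformations realizable as composites of elementary substitutions. -/
inductive Adm : ((Fin n →₀ ℕ) → (Fin n →₀ ℕ)) → Prop
  | id : Adm id
  | perm (π : Equiv.Perm (Fin n)) {T} (h : Adm T) : Adm (permT π ∘ T)
  | elem (r : Fin n) (hr : 0 < (r : ℕ)) {T} (h : Adm T) : Adm (elemT r ∘ T)

theorem Adm.comp {T S : (Fin n →₀ ℕ) → (Fin n →₀ ℕ)} (hT : Adm T) (hS : Adm S) :
    Adm (T ∘ S) := by
  induction hT with
  | id => exact hS
  | perm π h ih => exact Adm.perm π ih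
  | elem r hr h ih => exact Adm.elem r hr ih

theorem permT_apply (π : Equiv.Perm (Fin n)) (d : Fin n →₀ ℕ) (k : Fin n) :
    permT π d k = d (π.symm k) := rfl

theorem Adm.mono {T} (hT : @Adm n T) {a b : Fin n →₀ ℕ} (hab : a ≤ b) : T a ≤ T b := by
  induction hT with
  | id => exact hab
  | perm π h ih =>
    intro k
    simpa [permT_apply] using ih (π.symm k)
  | elem r hr h ih =>
    intro k
    simp only [Function.comp_apply, elemT, Finsupp.add_apply]
    refine add_le_add (ih k) ?_
    rcases eq_or_ne k r with rfl | hk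
    · simp only [Finsupp.single_apply, if_pos rfl]
      exact Finset.sum_le_sum fun i _ => ih i
    · simp [Finsupp.single_apply, (Ne.symm hk)]

theorem moveT_adm (i j : Fin n) (hij : i ≠ j) : Adm (moveT i j) := by
  have hn : 2 ≤ n := by
    by_contra h
    push_neg at h
    interval_cases n
    · exact i.elim0
    · exact hij (Subsingleton.elim i j)
  set z : Fin n := ⟨0, by omega⟩ with hz
  set o : Fin n := ⟨1, by omega⟩ with ho
  set c : Equiv.Perm (Fin n) := Equiv.swap z i with hc
  have hcz : c z = i := Equiv.swap_apply_left _ _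
  set j₀ : Fin n := c j with hj₀
  have hcj₀ : c j₀ = j := Equiv.swap_apply_self _ _ _
  have hj₀z : j₀ ≠ z := fun h => hij (by rw [← hcj₀, h, hcz])
  set s : Equiv.Perm (Fin n) := Equiv.swap o j₀ with hs
  set π : Equiv.Perm (Fin n) := s.trans c with hπ
  have hπz : π z = i := by
    have : s z = z :=
      Equiv.swap_apply_of_ne_of_ne (by simp [hz, ho, Fin.ext_iff]) (Ne.symm hj₀z)
    simp [hπ, Equiv.trans_apply, this, hcz]
  have hπo : π o = j := by
    simp [hπ, hs, Equiv.trans_apply, Equiv.swap_apply_left, hcj₀]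
  have key : moveT i j = permT π ∘ elemT o ∘ permT π.symm := by
    have hfilt : Finset.univ.filter (fun i : Fin n => i < o) = {z} := by
      ext x
      simp only [Finset.mem_filter, Finset.mem_univ, true_and, Finset.mem_singleton]
      rw [Fin.lt_def]
      constructor
      · intro hx; exact Fin.ext (by simp [ho] at hx; simpa [hz] using hx)
      · intro hx; subst hx; simp [hz, ho]
    funext d
    ext k
    simp only [Function.comp_apply, moveT, elemT, permT, Finsupp.add_apply,
      Finsupp.equivMapDomain_apply, Equiv.symm_symm, hfilt, Finset.sum_singleton,
      Equiv.apply_symm_apply]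
    congr 1
    rw [Finsupp.single_apply, Finsupp.single_apply]
    have : (o = π.symm k) ↔ (j = k) := by
      rw [Equiv.eq_symm_apply, hπo]
    simp only [hπz]
    by_cases h : j = k
    · rw [if_pos h, if_pos (this.mpr h)]
    · rw [if_neg h, if_neg (fun hh => h (this.mp hh))]
  rw [key]
  exact Adm.perm π (Adm.elem o (by simp [ho]) (Adm.perm π.symm Adm.id))

/-- The measure used for the principalization of a pair. -/
noncomputable def mu (a b : Fin n →₀ ℕ) : ℕ := ∑ k, ((a k - b k) + (b k - a k))

theorem mu_symm (a b : Fin n →₀ ℕ) : mu a b = mu b a := by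
  unfold mu; congr 1; funext k; omega

theorem moveT_apply (i j : Fin n) (a : Fin n →₀ ℕ) (k : Fin n) :
    moveT i j a k = a k + (if j = k then a i else 0) := by
  simp [moveT, Finsupp.single_apply]

theorem mu_move_lt (i j : Fin n) (a b : Fin n →₀ ℕ)
    (h1 : b i < a i) (h2 : a j < b j) (h3 : a i - b i ≤ b j - a j) :
    mu (moveT i j a) (moveT i j b) < mu a b := by
  have hij : i ≠ j := fun h => by subst h; omega
  unfold mu
  have hj : ∀ k, k ∈ Finset.univ → k ≠ j →
      ((moveT i j a k - moveT i j b k) + (moveT i j b k - moveT i j a k))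
      = ((a k - b k) + (b k - a k)) := by
    intro k _ hk
    rw [moveT_apply, moveT_apply, if_neg (Ne.symm hk), if_neg (Ne.symm hk)]
    omega
  rw [← Finset.add_sum_erase _ _ (Finset.mem_univ j),
      ← Finset.add_sum_erase _ _ (Finset.mem_univ j),
      Finset.sum_congr rfl (fun k hk => hj k (Finset.mem_of_mem_erase hk)
        (Finset.ne_of_mem_erase hk))]
  have : (moveT i j a j - moveT i j b j) + (moveT i j b j - moveT i j a j)
      < (a j - b j) + (b j - a j) := by
    rw [moveT_apply, moveT_apply, if_pos rfl, if_pos rfl]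
    omega
  omega

theorem pair_lemma : ∀ (N : ℕ) (a b : Fin n →₀ ℕ), mu a b ≤ N →
    ∃ T, Adm T ∧ (T a ≤ T b ∨ T b ≤ T a) := by
  intro N
  induction N using Nat.strong_induction_on with
  | _ N ih =>
    intro a b hN
    by_cases hab : a ≤ b
    · exact ⟨id, Adm.id, Or.inl hab⟩
    by_cases hba : b ≤ a
    · exact ⟨id, Adm.id, Or.inr hba⟩
    have hi : ∃ i, b i < a i := by
      by_contra h; push_neg at h; exact hab fun k => h k
    have hjj : ∃ j, a j < b j := by
      by_contra h; push_neg at h; exact hba fun k => h k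
    obtain ⟨i, hi⟩ := hi
    obtain ⟨j, hj⟩ := hjj
    by_cases hcmp : a i - b i ≤ b j - a j
    · have hlt := mu_move_lt i j a b hi hj hcmp
      have hN' : mu (moveT i j a) (moveT i j b) < N := lt_of_lt_of_le hlt hN
      obtain ⟨T, hT, hc⟩ := ih _ hN' (moveT i j a) (moveT i j b) le_rfl
      refine ⟨T ∘ moveT i j, hT.comp (moveT_adm i j fun h => by subst h; omega), ?_⟩
      exact hc
    · push_neg at hcmp
      have hlt := mu_move_lt j i b a hj hi (by omega)
      have hN' : mu (moveT j i a) (moveT j i b) < N := by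
        calc mu (moveT j i a) (moveT j i b) = mu (moveT j i b) (moveT j i a) := mu_symm _ _
          _ < mu b a := hlt
          _ = mu a b := mu_symm _ _
          _ ≤ N := hN
      obtain ⟨T, hT, hc⟩ := ih _ hN' (moveT j i a) (moveT j i b) le_rfl
      refine ⟨T ∘ moveT j i, hT.comp (moveT_adm j i fun h => by subst h; omega), ?_⟩
      exact hc

theorem principalize_exponents (E : Finset (Fin n →₀ ℕ)) (hE : E.Nonempty) :
    ∃ T, Adm T ∧ ∃ g ∈ E, ∀ x ∈ E, T g ≤ T x := by
  classical
  induction E using Finset.induction_on with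
  | empty => exact absurd hE (by simp)
  | @insert f E hf ih =>
    rcases E.eq_empty_or_nonempty with rfl | hE'
    · exact ⟨id, Adm.id, f, by simp⟩
    · obtain ⟨T₁, hT₁, g, hg, hmin⟩ := ih hE'
      obtain ⟨T₂, hT₂, hc⟩ := pair_lemma (mu (T₁ g) (T₁ f)) (T₁ g) (T₁ f) le_rfl
      refine ⟨T₂ ∘ T₁, hT₂.comp hT₁, ?_⟩
      rcases hc with hc | hc
      · exact ⟨g, Finset.mem_insert_of_mem hg, fun x hx => by
          rcases Finset.mem_insert.mp hx with rfl | hx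
          · exact hc
          · exact hT₂.mono (hmin x hx)⟩
      · exact ⟨f, Finset.mem_insert_self _ _, fun x hx => by
          rcases Finset.mem_insert.mp hx with rfl | hx
          · exact le_rfl
          · exact le_trans hc (hT₂.mono (hmin x hx))⟩

variable {K : Type*} [CommSemiring K]

theorem aeval_elem_monomial (r : Fin n) (d : Fin n →₀ ℕ) :
    MvPolynomial.aeval
      (fun i => if i < r then (MvPolynomial.X i * MvPolynomial.X r : MvPolynomial (Fin n) K)
        else MvPolynomial.X i)
      (monomial d (1 : K)) = monomial (elemT r d) 1 := by
  rw [aeval_monomial, map_one, one_mul]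
  have : (d.prod fun i k =>
      ((if i < r then (X i * X r : MvPolynomial (Fin n) K) else X i)) ^ k)
      = d.prod fun i k =>
        monomial (Finsupp.single i k + Finsupp.single r (if i < r then k else 0)) 1 := by
    refine Finsupp.prod_congr fun i _ => ?_
    by_cases h : i < r
    · rw [if_pos h, if_pos h, mul_pow, X_pow_eq_monomial, X_pow_eq_monomial, monomial_mul,
        one_mul]
    · rw [if_neg h, if_neg h, X_pow_eq_monomial, Finsupp.single_zero, add_zero]
  rw [this, Finsupp.prod, ← monomial_sum_one]
  congr 1
  rw [Finset.sum_add_distrib]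
  unfold elemT
  have hA : (∑ x ∈ d.support, Finsupp.single x (d x)) = d := Finsupp.sum_single d
  have hB : (∑ x ∈ d.support, Finsupp.single r (if x < r then d x else 0))
      = Finsupp.single r (∑ i ∈ Finset.univ.filter (fun i : Fin n => i < r), d i) := by
    rw [Finsupp.single_finset_sum, Finset.sum_filter,
      Finset.sum_subset (Finset.subset_univ d.support)
        (fun x _ hx => by rw [Finsupp.notMem_support_iff.mp hx]; simp)]
    refine Finset.sum_congr rfl fun x _ => ?_
    split <;> simp
  rw [hA, hB]

theorem Adm.realize {T} (hT : @Adm n T) :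
    ∃ L : List (MvPolynomial (Fin n) K →ₐ[K] MvPolynomial (Fin n) K),
      (∀ σ ∈ L, IsElemMonomialSubstPoly σ) ∧
      ∀ e : Fin n →₀ ℕ,
        (L.foldr (fun f g => f.comp g) (AlgHom.id K _)) (monomial e (1 : K))
          = monomial (T e) 1 := by
  induction hT with
  | id => exact ⟨[], by simp, fun e => rfl⟩
  | perm π h ih =>
    obtain ⟨L, hL, hfold⟩ := ih
    refine ⟨MvPolynomial.rename (R := K) ⇑π :: L, ?_, ?_⟩
    · intro σ hσ
      rcases List.mem_cons.mp hσ with rfl | hσ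
      · exact Or.inl ⟨π, rfl⟩
      · exact hL σ hσ
    · intro e
      simp only [List.foldr_cons, AlgHom.comp_apply, hfold e, Function.comp_apply, permT]
      rw [rename_monomial, Finsupp.equivMapDomain_eq_mapDomain]
  | elem r hr h ih =>
    obtain ⟨L, hL, hfold⟩ := ih
    refine ⟨MvPolynomial.aeval
      (fun i => if i < r then MvPolynomial.X i * MvPolynomial.X r
        else MvPolynomial.X i) :: L, ?_, ?_⟩
    · intro σ hσ
      rcases List.mem_cons.mp hσ with rfl | hσ
      · exact Or.inr ⟨r, hr, rfl⟩
      · exact hL σ hσ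
    · intro e
      simp only [List.foldr_cons, AlgHom.comp_apply, hfold e, Function.comp_apply]
      exact aeval_elem_monomial _ _

end MonomialPrincipalization

open MonomialPrincipalization MvPolynomial in
/-- Theorem 9 of the paper: monomial principalization of monomial
ideals, over an arbitrary field. If `J ⊆ K[x₁,…,xₙ]` is a nonzero ideal generated by
monomials, then there is a finite composite `σ̄` of elementary monomial substitutions such
that the ideal generated by `σ̄(J)` is principal, generated by a single monomial. -/
theorem monomial_principalization_of_monomial_ideal
    {K : Type*} [Field K] (n : ℕ) (J : Ideal (MvPolynomial (Fin n) K))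
    (hJ : ∃ S : Set (Fin n →₀ ℕ),
      J = Ideal.span ((fun e => MvPolynomial.monomial e (1 : K)) '' S))
    (hJ0 : J ≠ ⊥) :
    ∃ L : List (MvPolynomial (Fin n) K →ₐ[K] MvPolynomial (Fin n) K),
      (∀ σ ∈ L, IsElemMonomialSubstPoly σ) ∧
      ∃ e : Fin n →₀ ℕ,
        Ideal.map (L.foldr (fun f g => f.comp g) (AlgHom.id K _)) J
          = Ideal.span {MvPolynomial.monomial e (1 : K)} := by
  classical
  obtain ⟨S, hS⟩ := hJ
  -- Step 1: a finite subset of the monomial generators suffices.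
  obtain ⟨G, hG⟩ : J.FG := IsNoetherian.noetherian J
  have hGmem : ∀ g ∈ G, ∃ t : Finset (MvPolynomial (Fin n) K),
      ↑t ⊆ (fun e => MvPolynomial.monomial e (1 : K)) '' S ∧ g ∈ Ideal.span (↑t : Set _) := by
    intro g hg
    have : g ∈ J := hG ▸ Ideal.subset_span hg
    rw [hS] at this
    exact Submodule.mem_span_finite_of_mem_span this
  choose! f hf1 hf2 using hGmem
  set t : Finset (MvPolynomial (Fin n) K) := G.biUnion f with ht
  have htS : (↑t : Set _) ⊆ (fun e => MvPolynomial.monomial e (1 : K)) '' S := by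
    intro x hx
    simp only [ht, Finset.coe_biUnion, Set.mem_iUnion] at hx
    obtain ⟨g, hg, hx⟩ := hx
    exact hf1 g (by simpa using hg) hx
  have hJt : J = Ideal.span (↑t : Set _) := by
    apply le_antisymm
    · rw [← hG, Ideal.span_le]
      intro g hg
      refine Ideal.span_mono ?_ (hf2 g hg)
      exact_mod_cast Finset.coe_subset.mpr (Finset.subset_biUnion_of_mem f hg)
    · rw [hS]
      exact Ideal.span_mono htS
  -- Step 2: extract the exponents.
  have hmono : ∀ m ∈ t, ∃ d : Fin n →₀ ℕ, MvPolynomial.monomial d (1 : K) = m := by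
    intro m hm
    obtain ⟨d, _, hd⟩ := htS hm
    exact ⟨d, hd⟩
  choose! expOf hexp using hmono
  set E : Finset (Fin n →₀ ℕ) := t.image expOf with hE
  have hJE : J = Ideal.span ((fun e => MvPolynomial.monomial e (1 : K)) '' ↑E) := by
    rw [hJt]
    congr 1
    ext x
    constructor
    · intro hx
      exact ⟨expOf x, by simpa [hE] using ⟨x, hx, rfl⟩, hexp x hx⟩
    · rintro ⟨d, hd, rfl⟩
      simp only [hE, Finset.coe_image, Set.mem_image, Finset.mem_coe] at hd
      obtain ⟨m, hm, rfl⟩ := hd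
      show MvPolynomial.monomial (expOf m) (1 : K) ∈ (↑t : Set _)
      rw [hexp m hm]
      exact hm
  have hEne : E.Nonempty := by
    rcases E.eq_empty_or_nonempty with h | h
    · exfalso
      apply hJ0
      rw [hJE, h]
      simp only [Finset.coe_empty, Set.image_empty, Ideal.span_empty]
    · exact h
  -- Step 3: principalize the exponents and realize as elementary substitutions.
  obtain ⟨T, hT, g₀, hg₀, hmin⟩ := principalize_exponents E hEne
  obtain ⟨L, hL, hfold⟩ := hT.realize (K := K)
  refine ⟨L, hL, T g₀, ?_⟩
  set σ : MvPolynomial (Fin n) K →ₐ[K] MvPolynomial (Fin n) K :=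
    L.foldr (fun f g => f.comp g) (AlgHom.id K _) with hσ
  have himg : σ '' ((fun e => MvPolynomial.monomial e (1 : K)) '' ↑E)
      = (fun e => MvPolynomial.monomial (T e) (1 : K)) '' ↑E := by
    rw [Set.image_image]
    exact Set.image_congr fun d _ => hfold d
  rw [hJE, Ideal.map_span, himg]
  apply le_antisymm
  · rw [Ideal.span_le]
    rintro x ⟨d, hd, rfl⟩
    rw [SetLike.mem_coe, Ideal.mem_span_singleton]
    refine ⟨MvPolynomial.monomial (T d - T g₀) 1, ?_⟩
    rw [monomial_mul, mul_one, add_tsub_cancel_of_le (hmin d hd)]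
  · rw [Ideal.span_le, Set.singleton_subset_iff]
    exact Ideal.subset_span ⟨g₀, hg₀, rfl⟩
end

section
/- Let g, h ∈ ℂ[x,y] be irreducible polynomials with deg g = d, deg h = n, d < n, and g(0,0) = 0. Let R = ℂ[x,y]/(g), let 𝔪 be the maximal ideal of R generated by the images of x and y, and let R_𝔪 be the localization of R at 𝔪. Then for all i, j ∈ ℕ with i + j > n·d, the image of xⁱyʲ in R_𝔪 lies in the ideal of R_𝔪 generated by the image of h. -/
set_option maxHeartbeats 1000000
set_option synthInstance.maxHeartbeats 400000
set_option linter.unusedSectionVars false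
set_option linter.unusedTactic false
set_option linter.unreachableTactic false

open MvPolynomial

lemma Finsupp.my_degree_add {σ : Type*} (u v : σ →₀ ℕ) : (u + v).degree = u.degree + v.degree := by
  simp [Finsupp.degree_eq_weight_one, map_add]

variable {σ : Type*} {R : Type*} [CommRing R] [IsDomain R]

lemma top_homog_ne_zero (p : MvPolynomial σ R) (hp : p ≠ 0) :
    homogeneousComponent p.totalDegree p ≠ 0 := by
  classical
  obtain ⟨d, hd, hdeg⟩ : ∃ d ∈ p.support, (d.sum fun _ e => e) = p.totalDegree := by
    have hs : p.support.Nonempty := by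
      rwa [Finset.nonempty_iff_ne_empty, Ne, MvPolynomial.support_eq_empty]
    obtain ⟨d, hd, h⟩ := Finset.exists_mem_eq_sup p.support hs (fun m => m.sum fun _ e => e)
    exact ⟨d, hd, h.symm⟩
  intro hzero
  have : coeff d (homogeneousComponent p.totalDegree p) = coeff d p := by
    rw [coeff_homogeneousComponent, if_pos]
    simpa [Finsupp.degree_apply, Finsupp.sum] using hdeg
  rw [hzero] at this
  exact (mem_support_iff.mp hd) ((coeff_zero d).symm.trans this).symm

lemma homog_comp_mul_top (p q : MvPolynomial σ R) :
    homogeneousComponent (p.totalDegree + q.totalDegree) (p * q)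
      = homogeneousComponent p.totalDegree p * homogeneousComponent q.totalDegree q := by
  classical
  apply MvPolynomial.ext
  intro d
  rw [coeff_homogeneousComponent, coeff_mul, coeff_mul]
  by_cases hd : d.degree = p.totalDegree + q.totalDegree
  · rw [if_pos hd]
    apply Finset.sum_congr rfl
    rintro ⟨u, v⟩ huv
    have huv' : u + v = d := Finset.HasAntidiagonal.mem_antidiagonal.mp huv
    rw [coeff_homogeneousComponent, coeff_homogeneousComponent]
    by_cases hu : u.degree = p.totalDegree
    · have hv : v.degree = q.totalDegree := by
        have : u.degree + v.degree = d.degree := by rw [← huv']; simp [Finsupp.my_degree_add]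
        omega
      rw [if_pos hu, if_pos hv]
    · rw [if_neg hu]
      by_cases hcu : coeff u p = 0
      · rw [hcu, zero_mul]; split <;> ring
      · -- then u.degree < p.totalDegree, so v.degree > q.totalDegree, so coeff v q = 0
        have hule : u.degree ≤ p.totalDegree := by
          simpa [Finsupp.degree_apply, Finsupp.sum] using le_totalDegree (mem_support_iff.mpr hcu)
        have : q.totalDegree < v.degree := by
          have : u.degree + v.degree = d.degree := by rw [← huv']; simp [Finsupp.my_degree_add]
          omega
        have hcv : coeff v q = 0 := by
          by_contra hcv
          have := le_totalDegree (p := q) (mem_support_iff.mpr hcv)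
          have h2 : v.degree ≤ q.totalDegree := by
            simpa [Finsupp.degree_apply, Finsupp.sum] using this
          omega
        rw [hcv, mul_zero]; split <;> ring
  · rw [if_neg hd]
    symm
    apply Finset.sum_eq_zero
    rintro ⟨u, v⟩ huv
    have huv' : u + v = d := Finset.HasAntidiagonal.mem_antidiagonal.mp huv
    rw [coeff_homogeneousComponent, coeff_homogeneousComponent]
    by_cases hu : u.degree = p.totalDegree
    · by_cases hv : v.degree = q.totalDegree
      · exfalso; apply hd; rw [← huv']; rw [Finsupp.my_degree_add, hu, hv]
      · rw [if_neg hv, mul_zero]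
    · rw [if_neg hu, zero_mul]

lemma totalDegree_mul_eq' {p q : MvPolynomial σ R} (hp : p ≠ 0) (hq : q ≠ 0) :
    (p * q).totalDegree = p.totalDegree + q.totalDegree := by
  refine le_antisymm (totalDegree_mul p q) ?_
  by_contra hlt
  push_neg at hlt
  have h0 : homogeneousComponent (p.totalDegree + q.totalDegree) (p * q) = 0 :=
    homogeneousComponent_eq_zero _ _ hlt
  rw [homog_comp_mul_top] at h0
  exact mul_ne_zero (top_homog_ne_zero p hp) (top_homog_ne_zero q hq) h0

noncomputable def Dd (t : ℕ) : ℕ := ∑ i ∈ Finset.range (t+1), (i+1)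

lemma two_Dd (t : ℕ) : 2 * Dd t = (t+1)*(t+2) := by
  have h : (∑ i ∈ Finset.range (t+2), i) * 2 = (t+2) * (t+2-1) := Finset.sum_range_id_mul_two (t+2)
  have h2 : ∑ i ∈ Finset.range (t+2), i = ∑ i ∈ Finset.range (t+1), (i+1) := by
    rw [Finset.sum_range_succ']
    simp
  have h3 : (t+2) * (t+2-1) = (t+1)*(t+2) := by
    have : t+2-1 = t+1 := rfl
    rw [this, Nat.mul_comm]
  unfold Dd
  omega

lemma Dd_identity (d n t : ℕ) : Dd (d+n+t) + Dd t = n*d + Dd (n+t) + Dd (d+t) := by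
  have := two_Dd (d+n+t); have := two_Dd t; have := two_Dd (n+t); have := two_Dd (d+t)
  nlinarith [two_Dd (d+n+t), two_Dd t, two_Dd (n+t), two_Dd (d+t)]

-- counting finset
noncomputable def Ft (t : ℕ) : Finset (ℕ × ℕ) := (Finset.range (t+1)).biUnion Finset.HasAntidiagonal.antidiagonal

lemma mem_Ft {t : ℕ} {p : ℕ × ℕ} : p ∈ Ft t ↔ p.1 + p.2 ≤ t := by
  simp only [Ft, Finset.mem_biUnion, Finset.mem_range, Finset.HasAntidiagonal.mem_antidiagonal]
  constructor
  · rintro ⟨s, hs, h⟩; omega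
  · intro h; exact ⟨p.1+p.2, by omega, rfl⟩

lemma card_Ft (t : ℕ) : (Ft t).card = Dd t := by
  rw [Ft, Finset.card_biUnion]
  · simp [Dd, Finset.Nat.card_antidiagonal]
  · intro a _ b _ hab
    simp only [Finset.disjoint_left]
    intro p hp hq
    rw [Finset.HasAntidiagonal.mem_antidiagonal] at hp hq
    omega

lemma finrank_V (t : ℕ) :
    Module.finrank ℂ (restrictTotalDegree (Fin 2) ℂ t) = Dd t := by
  classical
  set s : Set (Fin 2 →₀ ℕ) := { n | (n.sum fun _ e => e) ≤ t } with hs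
  have b : Module.Basis s ℂ (restrictTotalDegree (Fin 2) ℂ t) := basisRestrictSupport ℂ s
  have hfin : s.Finite := by
    have : ∀ n : Fin 2 →₀ ℕ, (n.sum fun _ e => e) = n.degree := fun n => rfl
    simpa [hs, this] using Finsupp.finite_of_degree_le (σ := Fin 2) t
  have : Fintype s := hfin.fintype
  rw [Module.finrank_eq_card_basis b]
  -- construct equiv s ≃ Ft t
  have e : s ≃ (Ft t : Finset (ℕ × ℕ)) := by
    refine Equiv.ofBijective (fun n => ⟨(n.1 0, n.1 1), ?_⟩) ⟨?_, ?_⟩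
    · rw [mem_Ft]
      have := n.2
      simp only [hs, Set.mem_setOf_eq] at this
      rw [Finsupp.sum_fintype _ _ (fun _ => rfl), Fin.sum_univ_two] at this
      exact this
    · rintro ⟨n, hn⟩ ⟨m, hm⟩ h
      simp only [Subtype.mk.injEq, Prod.mk.injEq] at h
      ext ⟨k, hk⟩
      interval_cases k
      exacts [h.1, h.2]
    · rintro ⟨⟨a, b⟩, hab⟩
      rw [mem_Ft] at hab
      refine ⟨⟨Finsupp.equivFunOnFinite.symm ![a, b], ?_⟩, ?_⟩
      · simp only [hs, Set.mem_setOf_eq]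
        rw [Finsupp.sum_fintype _ _ (fun _ => rfl), Fin.sum_univ_two]
        simpa using hab
      · simp [Finsupp.equivFunOnFinite]
  rw [Fintype.card_congr e, ← card_Ft t]
  exact Fintype.card_coe _

notation "S2" => MvPolynomial (Fin 2) ℂ
notation "V" => restrictTotalDegree (Fin 2) ℂ

section
variable (g h : S2) (d n t : ℕ)

lemma memV {p : S2} {k : ℕ} : p ∈ V k ↔ p.totalDegree ≤ k := mem_restrictTotalDegree _ _ p

noncomputable def phi (hgd : g.totalDegree = d) (hhd : h.totalDegree = n) :
    (V (n+t) × V (d+t)) →ₗ[ℂ] V (d+n+t) where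
  toFun p := ⟨p.1.1 * g + p.2.1 * h, by
    refine Submodule.add_mem _ (memV.mpr ?_) (memV.mpr ?_)
    · refine le_trans (totalDegree_mul _ _) ?_
      have h1 : (p.1.1).totalDegree ≤ n + t := memV.mp p.1.2
      omega
    · refine le_trans (totalDegree_mul _ _) ?_
      have h1 : (p.2.1).totalDegree ≤ d + t := memV.mp p.2.2
      omega⟩
  map_add' p q := by apply Subtype.ext; simp only [Prod.fst_add, Prod.snd_add, Prod.smul_fst, Prod.smul_snd, Submodule.coe_add, Submodule.coe_smul, Submodule.coe_neg, RingHom.id_apply, smul_add, neg_add, mul_smul_comm, smul_mul_assoc, smul_neg]; ring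
  map_smul' c p := by apply Subtype.ext; simp only [Prod.fst_add, Prod.snd_add, Prod.smul_fst, Prod.smul_snd, Submodule.coe_add, Submodule.coe_smul, Submodule.coe_neg, RingHom.id_apply, smul_add, neg_add, mul_smul_comm, smul_mul_assoc, smul_neg]

noncomputable def psi (hgd : g.totalDegree = d) (hhd : h.totalDegree = n) :
    V t →ₗ[ℂ] (V (n+t) × V (d+t)) where
  toFun c := (⟨h * c.1, by
      rcases eq_or_ne c.1 0 with hc | hc
      · simp [hc]
      · refine memV.mpr (le_trans (totalDegree_mul _ _) ?_)
        have h1 : (c.1).totalDegree ≤ t := memV.mp c.2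
        omega⟩,
    ⟨-(g * c.1), by
      refine Submodule.neg_mem _ ?_
      rcases eq_or_ne c.1 0 with hc | hc
      · simp [hc]
      · refine memV.mpr (le_trans (totalDegree_mul _ _) ?_)
        have h1 : (c.1).totalDegree ≤ t := memV.mp c.2
        omega⟩)
  map_add' p q := by
    refine Prod.ext (Subtype.ext ?_) (Subtype.ext ?_) <;> simp only [Prod.fst_add, Prod.snd_add, Prod.smul_fst, Prod.smul_snd, Submodule.coe_add, Submodule.coe_smul, Submodule.coe_neg, RingHom.id_apply, smul_add, neg_add, mul_smul_comm, smul_mul_assoc, smul_neg] <;> ring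
  map_smul' c p := by
    refine Prod.ext (Subtype.ext ?_) (Subtype.ext ?_) <;> simp only [Prod.fst_add, Prod.snd_add, Prod.smul_fst, Prod.smul_snd, Submodule.coe_add, Submodule.coe_smul, Submodule.coe_neg, RingHom.id_apply, smul_add, neg_add, mul_smul_comm, smul_mul_assoc, smul_neg]

lemma psi_inj (hh0 : h ≠ 0) (hgd : g.totalDegree = d) (hhd : h.totalDegree = n) :
    Function.Injective (psi g h d n t hgd hhd) := by
  intro a b hab
  have h1 : h * a.1 = h * b.1 := congrArg (fun z => (z.1 : S2)) hab
  exact Subtype.ext (mul_left_cancel₀ hh0 h1)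

lemma range_psi_eq_ker_phi (hh0 : h ≠ 0) (hprime : Prime h) (hndvd : ¬ h ∣ g)
    (hgd : g.totalDegree = d) (hhd : h.totalDegree = n) :
    LinearMap.range (psi g h d n t hgd hhd) = LinearMap.ker (phi g h d n t hgd hhd) := by
  apply le_antisymm
  · rintro _ ⟨c, rfl⟩
    simp only [LinearMap.mem_ker, psi, phi, LinearMap.coe_mk, AddHom.coe_mk]
    apply Subtype.ext
    show (h * c.1) * g + (-(g * c.1)) * h = 0
    ring
  · rintro ⟨⟨p, hp⟩, ⟨q, hq⟩⟩ hker
    simp only [LinearMap.mem_ker, phi, LinearMap.coe_mk, AddHom.coe_mk] at hker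
    have hker' : p * g + q * h = 0 := congrArg Subtype.val hker
    -- h ∣ p * g
    have hdvd : h ∣ p * g := ⟨-q, by linear_combination hker'⟩
    have hdp : h ∣ p := by
      rcases (hprime.2.2 _ _ hdvd) with h1 | h1
      · exact h1
      · exact absurd h1 hndvd
    obtain ⟨c, rfl⟩ := hdp
    have hq' : q = -(g * c) := by
      have : h * (c * g + q) = 0 := by ring_nf; linear_combination hker'
      rcases mul_eq_zero.mp this with h1 | h1
      · exact absurd h1 hh0
      · linear_combination h1
    have hc : c ∈ V t := by
      rcases eq_or_ne c 0 with rfl | hcne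
      · simp
      · refine memV.mpr ?_
        have := memV.mp hp
        rw [totalDegree_mul_eq' hh0 hcne, hhd] at this
        omega
    refine ⟨⟨c, hc⟩, ?_⟩
    refine Prod.ext (Subtype.ext ?_) (Subtype.ext ?_)
    · rfl
    · simp [psi, hq']
end

lemma phi_apply (g h : S2) (d n t : ℕ) (hgd : g.totalDegree = d) (hhd : h.totalDegree = n)
    (p : V (n+t) × V (d+t)) : (phi g h d n t hgd hhd p : S2) = p.1.1 * g + p.2.1 * h := rfl

section
variable (g h : S2) (d n t : ℕ)

lemma finrank_quot (hh0 : h ≠ 0) (hprime : Prime h) (hndvd : ¬ h ∣ g)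
    (hgd : g.totalDegree = d) (hhd : h.totalDegree = n) :
    Module.finrank ℂ (V (d+n+t) ⧸ LinearMap.range (phi g h d n t hgd hhd)) = n*d := by
  have h1 := LinearMap.finrank_range_add_finrank_ker (phi g h d n t hgd hhd)
  rw [← range_psi_eq_ker_phi g h d n t hh0 hprime hndvd hgd hhd] at h1
  rw [LinearMap.finrank_range_of_inj (psi_inj g h d n t hh0 hgd hhd)] at h1
  rw [Module.finrank_prod, finrank_V, finrank_V, finrank_V] at h1
  have h2 := Submodule.finrank_quotient_add_finrank (LinearMap.range (phi g h d n t hgd hhd))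
  rw [finrank_V] at h2
  have h3 := Dd_identity d n t
  omega

lemma rank_B_le (hh0 : h ≠ 0) (hprime : Prime h) (hndvd : ¬ h ∣ g)
    (hgd : g.totalDegree = d) (hhd : h.totalDegree = n) :
    Module.rank ℂ (S2 ⧸ Ideal.span {g, h}) ≤ (n*d : ℕ) := by
  classical
  apply rank_le
  intro s li
  -- lift function
  have hsurj := Ideal.Quotient.mk_surjective (I := Ideal.span {g, h})
  set f : (S2 ⧸ Ideal.span {g, h}) → S2 := fun x => (hsurj x).choose with hf
  have hfspec : ∀ x, Ideal.Quotient.mk (Ideal.span {g, h}) (f x) = x := fun x => (hsurj x).choose_spec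
  set t := s.sup fun x => (f x).totalDegree with ht
  -- linear map V (d+n+t) → B
  let L : V (d+n+t) →ₗ[ℂ] (S2 ⧸ Ideal.span {g, h}) :=
    (Ideal.Quotient.mkₐ ℂ (Ideal.span {g, h})).toLinearMap.comp (V (d+n+t)).subtype
  have hrange : LinearMap.range (phi g h d n t hgd hhd) ≤ LinearMap.ker L := by
    rintro _ ⟨p, rfl⟩
    simp only [LinearMap.mem_ker, L, LinearMap.comp_apply, Submodule.subtype_apply,
      AlgHom.toLinearMap_apply, Ideal.Quotient.mkₐ_eq_mk]
    rw [phi_apply]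
    rw [Ideal.Quotient.eq_zero_iff_mem]
    have hgmem : g ∈ Ideal.span ({g, h} : Set S2) := Ideal.subset_span (by simp)
    have hhmem : h ∈ Ideal.span ({g, h} : Set S2) := Ideal.subset_span (by simp)
    exact Ideal.add_mem _ (Ideal.mul_mem_left _ _ hgmem) (Ideal.mul_mem_left _ _ hhmem)
  let Lbar := Submodule.liftQ _ L hrange
  -- lifted family
  have hmem : ∀ x : s, f x ∈ V (d+n+t) := by
    rintro ⟨x, hx⟩
    refine (mem_restrictTotalDegree _ _ _).mpr ?_
    show (f x).totalDegree ≤ d+n+t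
    have h2 : (f x).totalDegree ≤ t := Finset.le_sup (f := fun x => (f x).totalDegree) hx
    omega
  let q : s → (V (d+n+t) ⧸ LinearMap.range (phi g h d n t hgd hhd)) :=
    fun x => Submodule.Quotient.mk ⟨f x, hmem x⟩
  have hcomp : ∀ x : s, Lbar (q x) = (x : S2 ⧸ Ideal.span {g, h}) := by
    intro x
    simp only [q, Lbar, Submodule.liftQ_apply, L, LinearMap.comp_apply, Submodule.subtype_apply,
      AlgHom.toLinearMap_apply, Ideal.Quotient.mkₐ_eq_mk]
    exact hfspec x
  have hq : LinearIndependent ℂ q := by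
    apply LinearIndependent.of_comp Lbar
    have : (Lbar ∘ q) = fun x : s => (x : S2 ⧸ Ideal.span {g, h}) := funext hcomp
    rw [this]
    exact li
  have := hq.fintype_card_le_finrank
  rw [finrank_quot g h d n t hh0 hprime hndvd hgd hhd] at this
  rwa [Fintype.card_coe] at this
end

lemma key_S (g h : S2) (hh0 : h ≠ 0) (hprime : Prime h) (hndvd : ¬ h ∣ g) (d n : ℕ)
    (hgd : g.totalDegree = d) (hhd : h.totalDegree = n)
    (hg00 : MvPolynomial.eval (0 : Fin 2 → ℂ) g = 0)
    (i j : ℕ) (hij : n * d < i + j) :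
    ∃ u : S2, u ∉ Ideal.span {X 0, X 1} ∧
      u * (X 0 ^ i * X 1 ^ j) ∈ Ideal.span {g, h} := by
  classical
  have hMker : ∀ p ∈ Ideal.span ({X 0, X 1} : Set S2),
      MvPolynomial.eval (0 : Fin 2 → ℂ) p = 0 := by
    intro p hp
    rw [Ideal.mem_span_pair] at hp
    obtain ⟨a, b, rfl⟩ := hp
    simp
  by_cases hhM : h ∈ Ideal.span ({X 0, X 1} : Set S2)
  · -- main case
    set J : Ideal S2 := Ideal.span {g, h} with hJ
    have hJker : ∀ p ∈ J, MvPolynomial.eval (0 : Fin 2 → ℂ) p = 0 := by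
      intro p hp
      rw [hJ, Ideal.mem_span_pair] at hp
      obtain ⟨a, b, rfl⟩ := hp
      rw [map_add, map_mul, map_mul, hg00, hMker h hhM, mul_zero, mul_zero, add_zero]
    set m : Ideal (S2 ⧸ J) :=
      Ideal.span {Ideal.Quotient.mk J (X 0), Ideal.Quotient.mk J (X 1)} with hm
    have hεm : ∀ z ∈ m, Ideal.Quotient.lift J _ hJker z = 0 := by
      intro z hz
      rw [hm, Ideal.mem_span_pair] at hz
      obtain ⟨a, b, rfl⟩ := hz
      have e0 : Ideal.Quotient.lift J _ hJker (Ideal.Quotient.mk J (X 0)) = 0 := by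
        rw [Ideal.Quotient.lift_mk]; simp
      have e1 : Ideal.Quotient.lift J _ hJker (Ideal.Quotient.mk J (X 1)) = 0 := by
        rw [Ideal.Quotient.lift_mk]; simp
      rw [map_add, map_mul, map_mul, e0, e1, mul_zero, mul_zero, add_zero]
    have hone : (1 : S2 ⧸ J) ∉ m := fun hc => by simpa using hεm 1 hc
    -- finite dimensionality
    have hrank := rank_B_le g h d n hh0 hprime hndvd hgd hhd
    have hfin : Module.Finite ℂ (S2 ⧸ J) := by
      rw [← Module.rank_lt_aleph0_iff]
      exact lt_of_le_of_lt hrank (Cardinal.nat_lt_aleph0 _)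
    have hfinrank : Module.finrank ℂ (S2 ⧸ J) ≤ n*d := Module.finrank_le_of_rank_le hrank
    have hnoeth : IsNoetherian (S2 ⧸ J) (S2 ⧸ J) := isNoetherian_of_tower ℂ inferInstance
    -- pigeonhole: ∃ k ≤ n*d, m^(k+1) = m^k
    obtain ⟨k, hkle, hkeq⟩ : ∃ k ≤ n*d, m^(k+1) = m^k := by
      by_contra hc
      push_neg at hc
      have hstrict : ∀ k ≤ n*d, (m^(k+1)).restrictScalars ℂ < (m^k).restrictScalars ℂ := by
        intro k hk
        refine lt_of_le_of_ne (fun z hz => ?_) ?_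
        · exact Ideal.pow_le_pow_right (Nat.le_succ k) hz
        · intro heq
          exact hc k hk (Submodule.restrictScalars_injective ℂ _ _ heq)
      have hdesc : ∀ k, k ≤ n*d+1 →
          Module.finrank ℂ ((m^k).restrictScalars ℂ) + k ≤ Module.finrank ℂ (S2 ⧸ J) := by
        intro k
        induction k with
        | zero =>
          intro _
          simpa using Submodule.finrank_le ((m^0).restrictScalars ℂ)
        | succ k ih =>
          intro hk
          have h1 := hstrict k (by omega)
          have h2 := Submodule.finrank_lt_finrank_of_lt h1
          have h3 := ih (by omega)
          omega
      have := hdesc (n*d+1) le_rfl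
      omega
    -- Nakayama
    have hfg : (m^k).FG := IsNoetherian.noetherian _
    have hle : m^k ≤ m • (m^k) := by
      have := pow_succ' m k; rw [hkeq] at this; rw [Ideal.smul_eq_mul]; exact le_of_eq this
    obtain ⟨r, hr1, hr0⟩ :=
      Submodule.exists_sub_one_mem_and_smul_eq_zero_of_fg_of_le_smul m (m^k) hfg hle
    -- the monomial is in m^k
    have hxm : Ideal.Quotient.mk J (X 0) ∈ m := Ideal.subset_span (by simp)
    have hym : Ideal.Quotient.mk J (X 1) ∈ m := Ideal.subset_span (by simp)
    have hmono : Ideal.Quotient.mk J (X 0) ^ i * Ideal.Quotient.mk J (X 1) ^ j ∈ m ^ k := by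
      have h1 : Ideal.Quotient.mk J (X 0) ^ i * Ideal.Quotient.mk J (X 1) ^ j ∈ m ^ (i+j) := by
        refine (pow_add m i j).ge ?_
        exact Ideal.mul_mem_mul (Ideal.pow_mem_pow hxm i) (Ideal.pow_mem_pow hym j)
      exact Ideal.pow_le_pow_right (by omega) h1
    have hrmono : r * (Ideal.Quotient.mk J (X 0) ^ i * Ideal.Quotient.mk J (X 1) ^ j) = 0 :=
      hr0 _ hmono
    -- pull back
    obtain ⟨u, hu⟩ := Ideal.Quotient.mk_surjective r
    refine ⟨u, ?_, ?_⟩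
    · intro huM
      apply hone
      have hrm : r ∈ m := by
        rw [← hu]
        rw [Ideal.mem_span_pair] at huM
        obtain ⟨a, b, rfl⟩ := huM
        rw [hm, Ideal.mem_span_pair]
        exact ⟨Ideal.Quotient.mk J a, Ideal.Quotient.mk J b, by rw [map_add, map_mul, map_mul]⟩
      have heq : (1 : S2 ⧸ J) = r - (r - 1) := by ring
      rw [heq]
      exact Submodule.sub_mem _ hrm hr1
    · rw [← Ideal.Quotient.eq_zero_iff_mem (I := J), map_mul, hu, map_mul, map_pow, map_pow]
      exact hrmono
  · -- easy case: h itself is the denominator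
    refine ⟨h, hhM, ?_⟩
    rw [mul_comm]
    exact Ideal.mul_mem_left _ _ (Ideal.subset_span (by simp))

lemma mem_M_iff (p : S2) :
    p ∈ Ideal.span ({X 0, X 1} : Set S2) ↔ constantCoeff p = 0 := by
  have hset : ({X 0, X 1} : Set S2) = MvPolynomial.X '' Set.univ := by
    rw [Set.image_univ]
    ext q
    constructor
    · rintro (rfl | rfl)
      exacts [⟨0, rfl⟩, ⟨1, rfl⟩]
    · rintro ⟨i, rfl⟩
      fin_cases i
      · exact Or.inl rfl
      · exact Or.inr rfl
  rw [hset, mem_ideal_span_X_image, constantCoeff_eq]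
  constructor
  · intro hall
    by_contra hc
    obtain ⟨i, _, hne⟩ := hall 0 (mem_support_iff.mpr hc)
    simp at hne
  · intro h0 m hm
    rcases eq_or_ne m 0 with rfl | hne
    · exact absurd h0 (mem_support_iff.mp hm)
    · obtain ⟨i, hi⟩ := Finsupp.ne_iff.mp hne
      exact ⟨i, Set.mem_univ i, by simpa using hi⟩

/-- Remark 12 of the paper. Let `g, h ∈ ℂ[x,y]` be irreducible with
`deg g = d < n = deg h` and `g(0,0) = 0`. Let `R = ℂ[x,y]/(g)` and let `𝔪` be the maximal
ideal of `R` generated by the images `x̄, ȳ` of `x, y`. If `i + j > n·d`, then the image of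
`xⁱyʲ` in the localization `R_𝔪` lies in the ideal generated by the image of `h`: since
`R` is a domain and `𝔪` is prime, this says exactly that there is a denominator `u ∉ 𝔪`
with `u·x̄ⁱȳʲ` in the ideal of `R` generated by `h̄`. -/
theorem monomial_in_localized_ideal
    (g h : MvPolynomial (Fin 2) ℂ) (hg : Irreducible g) (hh : Irreducible h)
    (d n : ℕ) (hgd : g.totalDegree = d) (hhd : h.totalDegree = n) (hdn : d < n)
    (hg0 : MvPolynomial.eval (0 : Fin 2 → ℂ) g = 0)
    (i j : ℕ) (hij : n * d < i + j) :
    ∃ u : MvPolynomial (Fin 2) ℂ ⧸ Ideal.span {g},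
      u ∉ Ideal.span {Ideal.Quotient.mk (Ideal.span {g}) (MvPolynomial.X 0),
                      Ideal.Quotient.mk (Ideal.span {g}) (MvPolynomial.X 1)} ∧
      u * ((Ideal.Quotient.mk (Ideal.span {g}) (MvPolynomial.X 0)) ^ i *
           (Ideal.Quotient.mk (Ideal.span {g}) (MvPolynomial.X 1)) ^ j)
        ∈ Ideal.span {Ideal.Quotient.mk (Ideal.span {g}) h} := by
  classical
  have hh0 : h ≠ 0 := hh.ne_zero
  have hg00 : g ≠ 0 := hg.ne_zero
  have hprime : Prime h := hh.prime
  have hndvd : ¬ h ∣ g := by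
    rintro ⟨w, rfl⟩
    rcases hg.isUnit_or_isUnit rfl with h1 | h1
    · exact hh.not_isUnit h1
    · obtain ⟨v, hv⟩ := h1.exists_right_inv
      have hw0 : w ≠ 0 := by
        rintro rfl
        rw [zero_mul] at hv
        exact one_ne_zero hv.symm
      have hv0 : v ≠ 0 := by
        rintro rfl
        rw [mul_zero] at hv
        exact one_ne_zero hv.symm
      have hdw : w.totalDegree = 0 := by
        have := totalDegree_mul_eq' hw0 hv0
        rw [hv] at this
        simp at this
        omega
      have : (h * w).totalDegree = n := by
        rw [totalDegree_mul_eq' hh0 hw0, hdw, hhd]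
        omega
      omega
  obtain ⟨u, huM, huJ⟩ := key_S g h hh0 hprime hndvd d n hgd hhd hg0 i j hij
  have hgM : g ∈ Ideal.span ({X 0, X 1} : Set S2) := by
    rw [mem_M_iff]
    rw [← MvPolynomial.eval_zero]
    exact hg0
  refine ⟨Ideal.Quotient.mk (Ideal.span {g}) u, ?_, ?_⟩
  · intro hmem
    apply huM
    rw [Ideal.mem_span_pair] at hmem
    obtain ⟨a, b, hab⟩ := hmem
    obtain ⟨a0, rfl⟩ := Ideal.Quotient.mk_surjective a
    obtain ⟨b0, rfl⟩ := Ideal.Quotient.mk_surjective b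
    rw [← map_mul, ← map_mul, ← map_add] at hab
    have : a0 * X 0 + b0 * X 1 - u ∈ Ideal.span ({g} : Set S2) := by
      rw [← Ideal.Quotient.eq_zero_iff_mem, map_sub, hab, sub_self]
    obtain ⟨c, hc⟩ := Ideal.mem_span_singleton'.mp this
    have hu_eq : u = a0 * X 0 + b0 * X 1 - c * g := by
      linear_combination hc
    rw [hu_eq]
    refine Submodule.sub_mem _ ?_ (Ideal.mul_mem_left _ _ hgM)
    exact Submodule.add_mem _
      (Ideal.mul_mem_left _ _ (Ideal.subset_span (by simp)))
      (Ideal.mul_mem_left _ _ (Ideal.subset_span (by simp)))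
  · obtain ⟨a, b, hab⟩ := Ideal.mem_span_pair.mp huJ
    rw [Ideal.mem_span_singleton']
    refine ⟨Ideal.Quotient.mk (Ideal.span {g}) b, ?_⟩
    have h2 := congrArg (Ideal.Quotient.mk (Ideal.span {g})) hab
    simp only [map_add, map_mul, map_pow] at h2
    have hgz : Ideal.Quotient.mk (Ideal.span {g}) g = 0 :=
      Ideal.Quotient.eq_zero_iff_mem.mpr (Ideal.subset_span rfl)
    rw [hgz, mul_zero, zero_add] at h2
    exact h2
end

section
/- Let m, m₁, m₂ be positive integers with 2·min(m₁, m₂) ≤ m. Then there exists a formal power series g ∈ ℝ[[t]] such that (t^{2m₁} + t^{2m₂})·g = t^{m·m₁ + m·m₂} in ℝ[[t]], and the coefficient of t^k in g vanishes for every k outside the additive submonoid of ℕ generated by m₁ and m₂. That is, the power series F_m(t^{m₁}, t^{m₂}), where F_m(x,y) = x^m y^m/(x² + y²), lies in ℝ[[t^{m₁}, t^{m₂}]]. -/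
open PowerSeries

/-- Key arithmetic lemma: trading `m₂`'s for `m₁`'s. -/
lemma aux_trade (m₁ m₂ : ℕ) (hm₁ : 0 < m₁) (h12 : m₁ ≤ m₂) :
    ∀ c B : ℕ, c + m₁ ≤ B → ∃ α β : ℕ, α * m₁ + β * m₂ + c * m₁ = B * m₂ := by
  intro c
  induction c using Nat.strong_induction_on with
  | _ c ih =>
    intro B hB
    rcases Nat.eq_zero_or_pos c with rfl | hc
    · exact ⟨0, B, by ring⟩
    rcases le_or_gt c m₂ with hcm | hcm
    · refine ⟨m₂ - c, B - m₁, ?_⟩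
      have h1 : m₁ ≤ B := by omega
      zify [hcm, h1]
      ring
    · obtain ⟨α, β, hαβ⟩ := ih (c - m₂) (by omega) (B - m₁) (by omega)
      refine ⟨α, β, ?_⟩
      have h1 : m₁ ≤ B := by omega
      have h2 : m₂ ≤ c := le_of_lt hcm
      zify [h1, h2] at hαβ ⊢
      linarith

/-- The formal inverse of `1 + X^D`. -/
noncomputable def invOnePlusXPow (D : ℕ) : PowerSeries ℝ :=
  PowerSeries.mk fun n => if D ∣ n then (-1 : ℝ) ^ (n / D) else 0

lemma invOnePlusXPow_spec (D : ℕ) (hD : 0 < D) :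
    ((1 : PowerSeries ℝ) + X ^ D) * invOnePlusXPow D = 1 := by
  ext n
  rw [add_mul, one_mul, map_add, coeff_X_pow_mul', coeff_one]
  simp only [invOnePlusXPow, coeff_mk]
  by_cases hle : D ≤ n
  · rw [if_pos hle]
    by_cases hdvd : D ∣ n
    · obtain ⟨j, hj⟩ := hdvd
      rcases j with _ | i
      · omega
      · rw [if_pos ⟨i + 1, hj⟩]
        have hsub : n - D = D * i := by
          rw [hj, Nat.mul_succ, Nat.add_sub_cancel]
        rw [hsub, if_pos ⟨i, rfl⟩, hj, Nat.mul_div_cancel_left _ hD,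
          Nat.mul_div_cancel_left _ hD, if_neg (by omega)]
        ring
    · have hdvd' : ¬ D ∣ n - D := by
        intro h
        have : D ∣ (n - D) + D := h.add (dvd_refl D)
        rw [Nat.sub_add_cancel hle] at this
        exact hdvd this
      rw [if_neg hdvd, if_neg hdvd', if_neg (by omega)]
      norm_num
  · rw [if_neg hle]
    rcases Nat.eq_zero_or_pos n with rfl | hn
    · rw [if_pos (dvd_zero D), if_pos rfl]
      simp
    · have : ¬ D ∣ n := fun h => hle (Nat.le_of_dvd hn h)
      rw [if_neg this, if_neg (by omega)]
      norm_num

lemma mem_closure_pair (m₁ m₂ a b k : ℕ) (hk : k = a * m₁ + b * m₂) :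
    k ∈ AddSubmonoid.closure ({m₁, m₂} : Set ℕ) := by
  subst hk
  have h1 : m₁ ∈ AddSubmonoid.closure ({m₁, m₂} : Set ℕ) :=
    AddSubmonoid.subset_closure (by simp)
  have h2 : m₂ ∈ AddSubmonoid.closure ({m₁, m₂} : Set ℕ) :=
    AddSubmonoid.subset_closure (by simp)
  have := AddSubmonoid.add_mem _ (AddSubmonoid.nsmul_mem _ h1 a) (AddSubmonoid.nsmul_mem _ h2 b)
  simpa [smul_eq_mul] using this

/-- Main theorem under the extra hypothesis `m₁ ≤ m₂`. -/
lemma aux_main (m m₁ m₂ : ℕ) (hm₁ : 0 < m₁) (hm₂ : 0 < m₂) (h12 : m₁ ≤ m₂)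
    (hmin : 2 * m₁ ≤ m) :
    ∃ g : PowerSeries ℝ,
      (PowerSeries.X ^ (2 * m₁) + PowerSeries.X ^ (2 * m₂)) * g
        = PowerSeries.X ^ (m * m₁ + m * m₂) ∧
      ∀ k ∉ AddSubmonoid.closure ({m₁, m₂} : Set ℕ), PowerSeries.coeff k g = 0 := by
  have hm2 : 2 ≤ m := by omega
  rcases eq_or_lt_of_le h12 with rfl | hlt
  · -- case m₁ = m₂
    refine ⟨PowerSeries.C (R := ℝ) (1/2) * X ^ ((2 * m - 2) * m₁), ?_, ?_⟩
    · have hC : (PowerSeries.C (R := ℝ) (1/2) + PowerSeries.C (R := ℝ) (1/2)) = 1 := by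
        rw [← map_add]
        norm_num
      calc (X ^ (2 * m₁) + X ^ (2 * m₁)) * (PowerSeries.C (R := ℝ) (1/2) * X ^ ((2 * m - 2) * m₁))
          = (PowerSeries.C (R := ℝ) (1/2) + PowerSeries.C (R := ℝ) (1/2))
              * (X ^ (2 * m₁) * X ^ ((2 * m - 2) * m₁)) := by ring
        _ = X ^ (2 * m₁) * X ^ ((2 * m - 2) * m₁) := by rw [hC, one_mul]
        _ = X ^ (m * m₁ + m * m₁) := by
            rw [← pow_add]
            congr 1
            have : 2 * m₁ + (2 * m - 2) * m₁ = (2 + (2 * m - 2)) * m₁ := by ring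
            rw [this]
            have h22 : 2 + (2 * m - 2) = 2 * m := by omega
            rw [h22]
            ring
    · intro k hk
      rw [PowerSeries.coeff_C_mul, PowerSeries.coeff_X_pow]
      rw [if_neg, mul_zero]
      intro hke
      exact hk (mem_closure_pair m₁ m₁ (2 * m - 2) 0 k (by rw [hke]; ring))
  · -- case m₁ < m₂
    have h2me : 2 * m₁ ≤ m * m₁ + m * m₂ := by
      have : 2 * m₁ ≤ m * m₁ := Nat.mul_le_mul_right _ hm2
      omega
    refine ⟨X ^ (m * m₁ + m * m₂ - 2 * m₁) * invOnePlusXPow (2 * (m₂ - m₁)), ?_, ?_⟩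
    · have hfac : (X : PowerSeries ℝ) ^ (2 * m₁) + X ^ (2 * m₂)
          = X ^ (2 * m₁) * (1 + X ^ (2 * (m₂ - m₁))) := by
        rw [mul_add, mul_one, ← pow_add]
        congr 2
        omega
      rw [hfac]
      calc X ^ (2 * m₁) * (1 + X ^ (2 * (m₂ - m₁)))
              * (X ^ (m * m₁ + m * m₂ - 2 * m₁) * invOnePlusXPow (2 * (m₂ - m₁)))
          = X ^ (2 * m₁) * X ^ (m * m₁ + m * m₂ - 2 * m₁)
              * ((1 + X ^ (2 * (m₂ - m₁))) * invOnePlusXPow (2 * (m₂ - m₁))) := by ring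
        _ = X ^ (2 * m₁) * X ^ (m * m₁ + m * m₂ - 2 * m₁) := by
            rw [invOnePlusXPow_spec _ (by omega), mul_one]
        _ = X ^ (m * m₁ + m * m₂) := by rw [← pow_add]; congr 1; omega
    · intro k hk
      rw [coeff_X_pow_mul']
      split_ifs with hle
      · simp only [invOnePlusXPow, coeff_mk]
        rw [if_neg]
        rintro ⟨j, hj⟩
        apply hk
        have hkZ : (k : ℤ) = (m : ℤ) * m₁ + m * m₂ - 2 * m₁ + (2 * m₂ - 2 * m₁) * j := by
          have h1 : k = (m * m₁ + m * m₂ - 2 * m₁) + 2 * (m₂ - m₁) * j := by omega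
          rw [h1]
          push_cast [h2me, h12]
          ring
        rcases le_or_gt (2 * j + 2) m with hcase | hcase
        · apply mem_closure_pair m₁ m₂ (m - 2 - 2 * j) (m + 2 * j)
          zify [show 2 * j ≤ m - 2 by omega, show 2 ≤ m by omega]
          linear_combination hkZ
        · obtain ⟨α, β, hαβ⟩ := aux_trade m₁ m₂ hm₁ h12 (2 * j + 2 - m) (m + 2 * j)
            (by omega)
          apply mem_closure_pair m₁ m₂ α β
          zify [show m ≤ 2 * j + 2 by omega] at hαβ ⊢
          linear_combination hkZ - hαβ
      · simp

/-- Remark 12 of the paper. For positive integers `m, m₁, m₂` with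
`2 · min m₁ m₂ ≤ m`, the power series `F_m(t^{m₁}, t^{m₂})`, where
`F_m(x,y) = xᵐyᵐ/(x² + y²)`, lies in `ℝ[[t^{m₁}, t^{m₂}]]`: there is `g ∈ ℝ[[t]]` with
`(t^{2m₁} + t^{2m₂}) · g = t^{m·m₁ + m·m₂}` whose coefficients vanish outside the additive
submonoid of `ℕ` generated by `m₁` and `m₂`. -/
theorem bounded_multiplicity_monomial_curves_insufficient
    (m m₁ m₂ : ℕ) (hm : 0 < m) (hm₁ : 0 < m₁) (hm₂ : 0 < m₂)
    (hmin : 2 * min m₁ m₂ ≤ m) :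
    ∃ g : PowerSeries ℝ,
      (PowerSeries.X ^ (2 * m₁) + PowerSeries.X ^ (2 * m₂)) * g
        = PowerSeries.X ^ (m * m₁ + m * m₂) ∧
      ∀ k ∉ AddSubmonoid.closure ({m₁, m₂} : Set ℕ), PowerSeries.coeff k g = 0 := by
  rcases le_total m₁ m₂ with h12 | h21
  · exact aux_main m m₁ m₂ hm₁ hm₂ h12 (by simpa [min_eq_left h12] using hmin)
  · obtain ⟨g, hg1, hg2⟩ := aux_main m m₂ m₁ hm₂ hm₁ h21
      (by simpa [min_eq_right h21] using hmin)
    refine ⟨g, ?_, ?_⟩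
    · rw [add_comm (X ^ (2 * m₁)), hg1]
      congr 1
      omega
    · intro k hk
      apply hg2
      rwa [Set.pair_comm]
end
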